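/- arXiv:1611.00665 — 9 statements merged into one kernel-verified Lean document; each statement's English description precedes it below -/
import Mathlib

section
/- Let f be a non-negative submodular function on subsets of a finite set, and let A, B be sets. If S is a random subset of A including each element of A independently with probability 1/2, and T is an independent random subset of B including each element of B independently with probability 1/2, then E[f(S ∪ T)] ≥ (1/4)·(f(∅) + f(A) + f(B) + f(A ∪ B)). -/
open Finset

def Submodular {n : ℕ} (f : Finset (Fin n) → ℝ) : Prop :=
  ∀ S T : Finset (Fin n), f (S ∪ T) + f (S ∩ T) ≤ f S + f T

lemma half_lemma {n : ℕ} (f : Finset (Fin n) → ℝ) (hf : Submodular f)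
    (A C : Finset (Fin n)) :
    (2 ^ A.card : ℝ) * (f C + f (A ∪ C)) ≤ 2 * ∑ S ∈ A.powerset, f (S ∪ C) := by
  have key : ∀ S ∈ A.powerset, f C + f (A ∪ C) ≤ f (S ∪ C) + f ((A \ S) ∪ C) := by
    intro S hS
    rw [mem_powerset] at hS
    have h := hf (S ∪ C) ((A \ S) ∪ C)
    have hU : (S ∪ C) ∪ ((A \ S) ∪ C) = A ∪ C := by
      ext x
      simp only [mem_union, mem_sdiff]
      constructor
      · rintro ((h | h) | (⟨h, _⟩ | h)) <;> tauto
      · rintro (h | h)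
        · by_cases hx : x ∈ S <;> tauto
        · tauto
    have hI : (S ∪ C) ∩ ((A \ S) ∪ C) = C := by
      ext x
      simp only [mem_inter, mem_union, mem_sdiff]
      tauto
    rw [hU, hI] at h
    linarith
  have hsum : ∑ S ∈ A.powerset, (f C + f (A ∪ C)) ≤
      ∑ S ∈ A.powerset, (f (S ∪ C) + f ((A \ S) ∪ C)) :=
    Finset.sum_le_sum key
  have hbij : ∑ S ∈ A.powerset, f ((A \ S) ∪ C) = ∑ S ∈ A.powerset, f (S ∪ C) := by
    apply Finset.sum_nbij' (fun S => A \ S) (fun S => A \ S)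
    · intro S hS; rw [mem_powerset] at hS ⊢; exact sdiff_subset
    · intro S hS; rw [mem_powerset] at hS ⊢; exact sdiff_subset
    · intro S hS; rw [mem_powerset] at hS; exact Finset.sdiff_sdiff_eq_self hS
    · intro S hS; rw [mem_powerset] at hS; exact Finset.sdiff_sdiff_eq_self hS
    · intro S hS; rfl
  rw [Finset.sum_const, card_powerset, Finset.sum_add_distrib, hbij] at hsum
  rw [nsmul_eq_mul] at hsum
  have hcast : ((2 ^ A.card : ℕ) : ℝ) = (2 : ℝ) ^ A.card := by push_cast; ring
  rw [hcast] at hsum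
  linarith

theorem stmt_3 {n : ℕ} (f : Finset (Fin n) → ℝ) (hf : Submodular f)
    (hnonneg : ∀ S, 0 ≤ f S) (A B : Finset (Fin n)) :
    (1 / 4 : ℝ) * (f ∅ + f A + f B + f (A ∪ B)) ≤
      ∑ S ∈ A.powerset, ∑ T ∈ B.powerset,
        ((1 / 2 ^ A.card : ℝ) * (1 / 2 ^ B.card : ℝ)) * f (S ∪ T) := by
  set P : ℝ := (2 : ℝ) ^ A.card with hP
  set Q : ℝ := (2 : ℝ) ^ B.card with hQ
  have hPpos : (0 : ℝ) < P := by positivity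
  have hQpos : (0 : ℝ) < Q := by positivity
  set Sig : ℝ := ∑ S ∈ A.powerset, ∑ T ∈ B.powerset, f (S ∪ T) with hSig
  have hrhs : ∑ S ∈ A.powerset, ∑ T ∈ B.powerset,
      ((1 / P) * (1 / Q)) * f (S ∪ T) = ((1 / P) * (1 / Q)) * Sig := by
    rw [hSig, Finset.mul_sum]
    exact Finset.sum_congr rfl fun S _ => by rw [Finset.mul_sum]
  rw [hrhs]
  -- inner bound for each S
  have h1 : ∀ S ∈ A.powerset,
      Q * (f S + f (S ∪ B)) ≤ 2 * ∑ T ∈ B.powerset, f (S ∪ T) := by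
    intro S _
    have := half_lemma f hf B S
    rw [union_comm B S] at this
    calc Q * (f S + f (S ∪ B)) ≤ 2 * ∑ T ∈ B.powerset, f (T ∪ S) := this
      _ = 2 * ∑ T ∈ B.powerset, f (S ∪ T) := by
          congr 1; exact Finset.sum_congr rfl fun T _ => by rw [union_comm]
  have hsum1 : Q * ∑ S ∈ A.powerset, (f S + f (S ∪ B)) ≤ 2 * Sig := by
    rw [Finset.mul_sum, hSig, Finset.mul_sum]
    exact Finset.sum_le_sum h1
  have h2 : P * (f ∅ + f A) ≤ 2 * ∑ S ∈ A.powerset, f S := by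
    have := half_lemma f hf A ∅
    simp only [union_empty] at this
    exact this
  have h3 : P * (f B + f (A ∪ B)) ≤ 2 * ∑ S ∈ A.powerset, f (S ∪ B) :=
    half_lemma f hf A B
  have hsplit : ∑ S ∈ A.powerset, (f S + f (S ∪ B)) =
      (∑ S ∈ A.powerset, f S) + ∑ S ∈ A.powerset, f (S ∪ B) :=
    Finset.sum_add_distrib
  have hmain : P * Q * (f ∅ + f A + f B + f (A ∪ B)) ≤ 4 * Sig := by
    have := mul_le_mul_of_nonneg_left (add_le_add h2 h3) hQpos.le
    rw [hsplit] at hsum1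
    nlinarith
  set X : ℝ := f ∅ + f A + f B + f (A ∪ B) with hX
  have hnn : 0 ≤ (4 * Sig - P * Q * X) / (4 * (P * Q)) :=
    div_nonneg (by linarith) (by positivity)
  have heq : 1 / P * (1 / Q) * Sig - 1 / 4 * X = (4 * Sig - P * Q * X) / (4 * (P * Q)) := by
    field_simp
  linarith [heq, hnn]
end

section
/- Let f be a non-negative submodular function on subsets of [n], let A ⊆ [n], and let p ∈ [0,1]. If R is a random subset of A including each element independently with probability p, then E[f(R)] ≥ p(1−p)·max_{T ⊆ A} f(T). -/
open Finset

noncomputable def Ex {n : ℕ} (p : ℝ) (Y : Finset (Fin n)) (f : Finset (Fin n) → ℝ) : ℝ :=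
  ∑ S ∈ Y.powerset, p ^ S.card * (1 - p) ^ (Y.card - S.card) * f S

lemma Submodular.insert {n : ℕ} {f : Finset (Fin n) → ℝ} (hf : Submodular f) (a : Fin n) :
    Submodular (fun S => f (Insert.insert a S)) := by
  intro S T
  have h := hf (Insert.insert a S) (Insert.insert a T)
  have h1 : Insert.insert a S ∪ Insert.insert a T = Insert.insert a (S ∪ T) := by
    ext x; simp [or_assoc, or_left_comm, or_comm]
  have h2 : Insert.insert a S ∩ Insert.insert a T = Insert.insert a (S ∩ T) := by
    ext x; simp; tauto
  rw [h1, h2] at h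
  simpa using h

lemma subm_marginal {n : ℕ} {f : Finset (Fin n) → ℝ} (hf : Submodular f)
    {a : Fin n} {U S : Finset (Fin n)} (hUS : U ⊆ S) (ha : a ∉ S) :
    f (insert a S) + f U ≤ f S + f (insert a U) := by
  have h := hf (insert a U) S
  have h1 : insert a U ∪ S = insert a S := by
    ext x; simp
    constructor
    · rintro (h | h | h)
      exacts [Or.inl h, Or.inr (hUS h), Or.inr h]
    · rintro (h | h)
      exacts [Or.inl h, Or.inr (Or.inr h)]
  have h2 : insert a U ∩ S = U := by
    ext x; simp
    constructor
    · rintro ⟨h | h, hs⟩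
      · exact absurd (h ▸ hs) ha
      · exact h
    · intro h; exact ⟨Or.inr h, hUS h⟩
  rw [h1, h2] at h
  linarith

lemma Ex_insert {n : ℕ} (p : ℝ) {a : Fin n} {Y : Finset (Fin n)} (ha : a ∉ Y)
    (f : Finset (Fin n) → ℝ) :
    Ex p (insert a Y) f = (1-p) * Ex p Y f + p * Ex p Y (fun S => f (insert a S)) := by
  unfold Ex
  rw [powerset_insert, sum_union, sum_image]
  · have hc : (insert a Y).card = Y.card + 1 := card_insert_of_notMem ha
    have e1 : ∀ S ∈ Y.powerset, p ^ S.card * (1 - p) ^ ((insert a Y).card - S.card) * f S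
        = (1-p) * (p ^ S.card * (1 - p) ^ (Y.card - S.card) * f S) := by
      intro S hS
      have hle : S.card ≤ Y.card := card_le_card (mem_powerset.mp hS)
      rw [hc, Nat.succ_sub hle, pow_succ]
      ring
    have e2 : ∀ S ∈ Y.powerset, p ^ (insert a S).card * (1 - p) ^ ((insert a Y).card - (insert a S).card) * f (insert a S)
        = p * (p ^ S.card * (1 - p) ^ (Y.card - S.card) * f (insert a S)) := by
      intro S hS
      have hS' := mem_powerset.mp hS
      have haS : a ∉ S := fun h => ha (hS' h)
      have hle : S.card ≤ Y.card := card_le_card hS'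
      rw [card_insert_of_notMem haS, hc, Nat.succ_sub_succ, pow_succ]
      ring
    rw [sum_congr rfl e1, sum_congr rfl e2, ← mul_sum, ← mul_sum]
  · intro S hS S' hS' h
    have haS : a ∉ S := fun hx => ha (mem_powerset.mp hS hx)
    have haS' : a ∉ S' := fun hx => ha (mem_powerset.mp hS' hx)
    have := congrArg (fun t => Finset.erase t a) h
    simpa [erase_insert, haS, haS'] using this
  · rw [disjoint_left]
    intro S hS hS2
    rw [mem_image] at hS2
    obtain ⟨S', _, rfl⟩ := hS2
    exact ha (mem_powerset.mp hS (mem_insert_self a S'))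

lemma lemA {n : ℕ} {p : ℝ} (hp0 : 0 ≤ p) (hp1 : p ≤ 1)
    {f : Finset (Fin n) → ℝ} (hf : Submodular f) (Y : Finset (Fin n)) :
    (1-p) * f ∅ + p * f Y ≤ Ex p Y f := by
  induction Y using Finset.induction generalizing f with
  | empty =>
    have : (1-p) * f ∅ + p * f ∅ = f ∅ := by ring
    simp only [Ex, powerset_empty, sum_singleton, card_empty, pow_zero, one_mul,
      Nat.sub_zero]
    linarith
  | insert _ _ ha ih =>
    rename_i a Y
    rw [Ex_insert p ha]
    have h1 := ih hf
    have h2 := ih (hf.insert a)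
    have hm : f (insert a Y) + f ∅ ≤ f Y + f (insert a ∅) :=
      subm_marginal hf (empty_subset Y) ha
    have h0 : (0:ℝ) ≤ 1 - p := by linarith
    have k1 := mul_le_mul_of_nonneg_left h1 h0
    have k2 := mul_le_mul_of_nonneg_left h2 hp0
    have k3 := mul_le_mul_of_nonneg_left hm (mul_nonneg h0 hp0)
    nlinarith [k1, k2, k3]

lemma lemB {n : ℕ} {p : ℝ} (hp0 : 0 ≤ p) (hp1 : p ≤ 1)
    {f : Finset (Fin n) → ℝ} (hf : Submodular f) (X Y : Finset (Fin n))
    (hXY : Disjoint X Y) :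
    (1-p)*(1-p) * f ∅ + p*(1-p) * f X + (1-p)*p * f Y + p*p * f (X ∪ Y)
      ≤ Ex p (X ∪ Y) f := by
  induction X using Finset.induction generalizing f with
  | empty =>
    have := lemA hp0 hp1 hf Y
    simp only [empty_union]
    nlinarith
  | insert _ _ ha ih =>
    rename_i a X
    have haY : a ∉ Y := fun h => disjoint_left.mp hXY (mem_insert_self a X) h
    have hXY' : Disjoint X Y := disjoint_of_subset_left (subset_insert a X) hXY
    have haXY : a ∉ X ∪ Y := by simp [ha, haY]
    have hU : insert a X ∪ Y = insert a (X ∪ Y) := insert_union a X Y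
    rw [hU, Ex_insert p haXY]
    have h1 := ih hf hXY'
    have h2 := ih (hf.insert a) hXY'
    have hm1 : f (insert a X) + f ∅ ≤ f X + f (insert a ∅) :=
      subm_marginal hf (empty_subset X) ha
    have hm2 : f (insert a (X ∪ Y)) + f Y ≤ f (X ∪ Y) + f (insert a Y) :=
      subm_marginal hf subset_union_right haXY
    have h0 : (0:ℝ) ≤ 1 - p := by linarith
    have k1 := mul_le_mul_of_nonneg_left h1 h0
    have k2 := mul_le_mul_of_nonneg_left h2 hp0
    have k3 := mul_le_mul_of_nonneg_left hm1 (mul_nonneg (mul_nonneg h0 h0) hp0)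
    have k4 := mul_le_mul_of_nonneg_left hm2 (mul_nonneg (mul_nonneg h0 hp0) hp0)
    nlinarith [k1, k2, k3, k4]

theorem stmt_4 {n : ℕ} (f : Finset (Fin n) → ℝ) (hf : Submodular f)
    (hnonneg : ∀ S, 0 ≤ f S) (A : Finset (Fin n)) (p : ℝ)
    (hp0 : 0 ≤ p) (hp1 : p ≤ 1) (T : Finset (Fin n)) (hT : T ⊆ A) :
    p * (1 - p) * f T ≤
      ∑ R ∈ A.powerset, p ^ R.card * (1 - p) ^ (A.card - R.card) * f R := by
  have hd : Disjoint T (A \ T) := disjoint_sdiff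
  have hu : T ∪ (A \ T) = A := union_sdiff_of_subset hT
  have h := lemB hp0 hp1 hf T (A \ T) hd
  rw [hu] at h
  have h0 : (0:ℝ) ≤ 1 - p := by linarith
  have := hnonneg ∅
  have := hnonneg (A \ T)
  have := hnonneg A
  have hE : Ex p A f = ∑ R ∈ A.powerset, p ^ R.card * (1 - p) ^ (A.card - R.card) * f R := rfl
  nlinarith [mul_nonneg (mul_nonneg h0 h0) (hnonneg ∅), mul_nonneg (mul_nonneg h0 hp0) (hnonneg (A \ T)), mul_nonneg (mul_nonneg hp0 hp0) (hnonneg A)]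
end

section
/- Let f be a non-negative submodular function on subsets of [n] with maximizer S*, and let 0 ≤ L ≤ H ≤ 1. Let x ∈ [0,1]^n be a vector with L ≤ x_i ≤ H for all i. Then the multilinear extension satisfies F(x) ≥ L(1−H)·f(S*). -/
open Finset

noncomputable def multilinear {n : ℕ} (f : Finset (Fin n) → ℝ) (x : Fin n → ℝ) : ℝ :=
  ∑ S : Finset (Fin n), (∏ i ∈ S, x i) * (∏ i ∈ Sᶜ, (1 - x i)) * f S

namespace Stmt5Aux

variable {n : ℕ}

noncomputable def Exp (D : Finset (Fin n)) (x : Fin n → ℝ) (g : Finset (Fin n) → ℝ) : ℝ :=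
  ∑ A ∈ D.powerset, (∏ i ∈ A, x i) * (∏ i ∈ D \ A, (1 - x i)) * g A

lemma Exp_empty (x : Fin n → ℝ) (g : Finset (Fin n) → ℝ) : Exp ∅ x g = g ∅ := by
  simp [Exp]

lemma Exp_insert {u : Fin n} {D : Finset (Fin n)} (hu : u ∉ D) (x : Fin n → ℝ)
    (g : Finset (Fin n) → ℝ) :
    Exp (insert u D) x g
      = (1 - x u) * Exp D x g + x u * Exp D x (fun A => g (insert u A)) := by
  unfold Exp
  rw [Finset.sum_powerset_insert hu, Finset.mul_sum, Finset.mul_sum]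
  congr 1
  · apply Finset.sum_congr rfl
    intro A hA
    rw [Finset.mem_powerset] at hA
    have huA : u ∉ A := fun h => hu (hA h)
    have h1 : insert u D \ A = insert u (D \ A) := by
      ext i
      by_cases hiu : i = u <;>
        simp [hiu, Finset.mem_sdiff, Finset.mem_insert, huA, hu]
    rw [h1, Finset.prod_insert (by simp [hu])]
    ring
  · apply Finset.sum_congr rfl
    intro A hA
    rw [Finset.mem_powerset] at hA
    have huA : u ∉ A := fun h => hu (hA h)
    have h2 : insert u D \ insert u A = D \ A := by
      ext i
      by_cases hiu : i = u <;>
        simp [hiu, Finset.mem_sdiff, Finset.mem_insert, hu]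
    rw [h2, Finset.prod_insert huA]
    ring

lemma Exp_nonneg {D : Finset (Fin n)} {x : Fin n → ℝ} {g : Finset (Fin n) → ℝ}
    (hx : ∀ i ∈ D, 0 ≤ x i ∧ x i ≤ 1) (hg : ∀ A, 0 ≤ g A) : 0 ≤ Exp D x g := by
  apply Finset.sum_nonneg
  intro A hA
  rw [Finset.mem_powerset] at hA
  apply mul_nonneg (mul_nonneg ?_ ?_) (hg A)
  · exact Finset.prod_nonneg fun i hi => (hx i (hA hi)).1
  · exact Finset.prod_nonneg fun i hi => by
      have := (hx i (Finset.mem_sdiff.mp hi).1).2; linarith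

lemma Exp_one (D : Finset (Fin n)) (x : Fin n → ℝ) :
    Exp D x (fun _ => (1 : ℝ)) = 1 := by
  unfold Exp
  simp only [mul_one]
  rw [← Finset.prod_add]
  apply Finset.prod_eq_one
  intro i _
  ring

lemma Exp_add (D : Finset (Fin n)) (x : Fin n → ℝ) (g h : Finset (Fin n) → ℝ) :
    Exp D x (fun A => g A + h A) = Exp D x g + Exp D x h := by
  unfold Exp
  rw [← Finset.sum_add_distrib]
  apply Finset.sum_congr rfl
  intro A _
  ring

lemma Exp_smul (D : Finset (Fin n)) (x : Fin n → ℝ) (c : ℝ) (g : Finset (Fin n) → ℝ) :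
    Exp D x (fun A => c * g A) = c * Exp D x g := by
  unfold Exp
  rw [Finset.mul_sum]
  apply Finset.sum_congr rfl
  intro A _
  ring

lemma Exp_const (D : Finset (Fin n)) (x : Fin n → ℝ) (c : ℝ) :
    Exp D x (fun _ => c) = c := by
  have h : Exp D x (fun _ => c) = Exp D x (fun A => c * (fun _ => (1:ℝ)) A) := by
    simp
  rw [h, Exp_smul, Exp_one, mul_one]

lemma Exp_mono {D : Finset (Fin n)} {x : Fin n → ℝ} {g h : Finset (Fin n) → ℝ}
    (hx : ∀ i ∈ D, 0 ≤ x i ∧ x i ≤ 1) (hgh : ∀ A ⊆ D, g A ≤ h A) :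
    Exp D x g ≤ Exp D x h := by
  apply Finset.sum_le_sum
  intro A hA
  rw [Finset.mem_powerset] at hA
  apply mul_le_mul_of_nonneg_left (hgh A hA)
  apply mul_nonneg
  · exact Finset.prod_nonneg fun i hi => (hx i (hA hi)).1
  · exact Finset.prod_nonneg fun i hi => by
      have := (hx i (Finset.mem_sdiff.mp hi).1).2; linarith

lemma Exp_diff_le {D : Finset (Fin n)} {x : Fin n → ℝ} {g h : Finset (Fin n) → ℝ}
    (hx : ∀ i ∈ D, 0 ≤ x i ∧ x i ≤ 1) (c : ℝ) (hgh : ∀ A ⊆ D, h A ≤ g A + c) :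
    Exp D x h ≤ Exp D x g + c := by
  have := Exp_mono hx (h := fun A => g A + c) hgh
  rwa [Exp_add, Exp_const] at this

lemma Exp_union (D1 : Finset (Fin n)) :
    ∀ D2 : Finset (Fin n), Disjoint D1 D2 → ∀ (x : Fin n → ℝ) (g : Finset (Fin n) → ℝ),
      Exp (D1 ∪ D2) x g = Exp D2 x (fun B => Exp D1 x (fun A => g (A ∪ B))) := by
  intro D2
  induction D2 using Finset.induction_on with
  | empty =>
      intro _ x g
      simp [Exp_empty]
  | @insert u D2' hu ih =>
      intro hdisj x g
      rw [Finset.disjoint_insert_right] at hdisj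
      obtain ⟨huD1, hdisj'⟩ := hdisj
      have huD : u ∉ D1 ∪ D2' := by simp [huD1, hu]
      have h1 : D1 ∪ insert u D2' = insert u (D1 ∪ D2') := Finset.union_insert u D1 D2'
      rw [h1, Exp_insert huD, ih hdisj', ih hdisj', Exp_insert hu]
      have e2 : (fun B => Exp D1 x fun A => g (insert u (A ∪ B)))
          = fun B => Exp D1 x fun A => g (A ∪ insert u B) := by
        funext B
        congr 1
        funext A
        congr 1
        rw [Finset.union_insert]
      rw [e2]

lemma subadd {f : Finset (Fin n) → ℝ} (hf : Submodular f) {u : Fin n}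
    {T B : Finset (Fin n)} (huT : u ∉ T) (huB : u ∉ B) :
    f (insert u T ∪ B) ≤ f (T ∪ B) + (f (insert u T) - f T) := by
  have h := hf (insert u T) (T ∪ B)
  have e1 : insert u T ∪ (T ∪ B) = insert u T ∪ B := by
    ext i; simp only [Finset.mem_union, Finset.mem_insert]; tauto
  have e2 : insert u T ∩ (T ∪ B) = T := by
    ext i
    by_cases hiu : i = u <;>
      simp [hiu, Finset.mem_inter, Finset.mem_insert, Finset.mem_union, huT, huB]
    tauto
  rw [e1, e2] at h
  linarith

lemma subadd' {f : Finset (Fin n) → ℝ} (hf : Submodular f) {u : Fin n}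
    {D' C A : Finset (Fin n)} (huD : u ∉ D') (hAD : A ⊆ D') :
    f (A ∪ C) + (f (insert u D' ∪ C) - f (D' ∪ C)) ≤ f (A ∪ insert u C) := by
  have h := hf (D' ∪ C) (A ∪ insert u C)
  have e1 : (D' ∪ C) ∪ (A ∪ insert u C) = insert u D' ∪ C := by
    ext i
    simp only [Finset.mem_union, Finset.mem_insert]
    constructor
    · rintro ((h | h) | (h | (h | h))) <;> tauto
    · rintro ((h | h) | h)
      · tauto
      · tauto
      · tauto
  have e2 : (D' ∪ C) ∩ (A ∪ insert u C) = A ∪ C := by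
    ext i
    by_cases hiu : i = u <;>
      simp only [hiu, Finset.mem_inter, Finset.mem_union, Finset.mem_insert]
    · constructor
      · rintro ⟨h1 | h1, _⟩
        · exact absurd h1 (by simpa using huD)
        · tauto
      · rintro (h | h)
        · exact absurd (hAD h) (by simpa using huD)
        · tauto
    · constructor
      · rintro ⟨h1 | h1, h2 | (h2 | h2)⟩ <;> tauto
      · rintro (h | h)
        · exact ⟨Or.inl (hAD h), Or.inl h⟩
        · tauto
  rw [e1, e2] at h
  linarith

/-- Sampling lemma, upper side: if every coordinate is at most `H` on `D`,
    `E[f(T ∪ B)] ≥ (1-H) f(T) + H E[f(T ∪ B')]` with rescaled probabilities. -/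
lemma lemA {f : Finset (Fin n) → ℝ} (hf : Submodular f) {H : ℝ} (hH1 : H ≤ 1) :
    ∀ D : Finset (Fin n), ∀ T : Finset (Fin n), Disjoint D T →
      ∀ x : Fin n → ℝ, (∀ i ∈ D, 0 ≤ x i ∧ x i ≤ H) →
      (1 - H) * f T + H * Exp D (fun i => x i / H) (fun B => f (T ∪ B))
        ≤ Exp D x (fun B => f (T ∪ B)) := by
  intro D
  induction D using Finset.induction_on with
  | empty =>
      intro T _ x _
      rw [Exp_empty, Exp_empty]
      have : T ∪ ∅ = T := Finset.union_empty T
      rw [this]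
      nlinarith [le_refl (f T)]
  | @insert u D' hu ih =>
      intro T hdisj x hx
      rw [Finset.disjoint_insert_left] at hdisj
      obtain ⟨huT, hdisj'⟩ := hdisj
      have hxu := hx u (Finset.mem_insert_self u D')
      have hx' : ∀ i ∈ D', 0 ≤ x i ∧ x i ≤ H := fun i hi => hx i (Finset.mem_insert_of_mem hi)
      have hx'' : ∀ i ∈ D', 0 ≤ x i / H ∧ x i / H ≤ 1 := by
        intro i hi
        obtain ⟨h0, h1⟩ := hx' i hi
        by_cases hH0 : H = 0
        · have : x i = 0 := le_antisymm (hH0 ▸ h1) h0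
          simp [this]
        · have hHpos : 0 < H := lt_of_le_of_ne (le_trans h0 h1) (Ne.symm hH0)
          exact ⟨div_nonneg h0 hHpos.le, (div_le_one hHpos).mpr h1⟩
      have hfun : (fun A => f (T ∪ insert u A)) = (fun A => f (insert u T ∪ A)) := by
        funext A
        rw [Finset.union_insert, Finset.insert_union]
      rw [Exp_insert hu x, Exp_insert hu (fun i => x i / H), hfun]
      have I1 := ih T hdisj' x hx'
      have I2 := ih (insert u T) (Finset.disjoint_insert_right.mpr ⟨hu, hdisj'⟩) x hx'
      set x' : Fin n → ℝ := fun i => x i / H with hx'def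
      set P := Exp D' x' (fun B => f (T ∪ B)) with hP
      set Q := Exp D' x' (fun B => f (insert u T ∪ B)) with hQ
      set X0 := Exp D' x (fun B => f (T ∪ B)) with hX0
      set X1 := Exp D' x (fun B => f (insert u T ∪ B)) with hX1
      have key : Q ≤ P + (f (insert u T) - f T) := by
        apply Exp_diff_le hx''
        intro A hA
        exact subadd hf huT (fun h => hu (hA h))
      have hpH : H * (x u / H) = x u := by
        by_cases hH0 : H = 0
        · have : x u = 0 := le_antisymm (hH0 ▸ hxu.2) hxu.1
          simp [this, hH0]
        · field_simp
      have expand : H * ((1 - x u / H) * P + x u / H * Q) = (H - x u) * P + x u * Q := by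
        have h2 : H * (1 - x u / H) = H - x u := by
          rw [mul_sub, hpH, mul_one]
        calc H * ((1 - x u / H) * P + x u / H * Q)
            = (H * (1 - x u / H)) * P + (H * (x u / H)) * Q := by ring
          _ = (H - x u) * P + x u * Q := by rw [hpH, h2]
      rw [expand]
      have c1 : 0 ≤ 1 - x u := by linarith [hxu.2]
      have c2 : 0 ≤ x u * (1 - H) := mul_nonneg hxu.1 (by linarith)
      have t1 := mul_le_mul_of_nonneg_left I1 c1
      have t2 := mul_le_mul_of_nonneg_left I2 hxu.1
      have t3 := mul_le_mul_of_nonneg_left key c2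
      nlinarith [t1, t2, t3]

lemma corA {f : Finset (Fin n) → ℝ} (hf : Submodular f) (hnn : ∀ S, 0 ≤ f S)
    {H : ℝ} (hH0 : 0 ≤ H) (hH1 : H ≤ 1) (D T : Finset (Fin n)) (hdisj : Disjoint D T)
    (x : Fin n → ℝ) (hx : ∀ i ∈ D, 0 ≤ x i ∧ x i ≤ H) :
    (1 - H) * f T ≤ Exp D x (fun B => f (T ∪ B)) := by
  have h := lemA hf hH1 D T hdisj x hx
  have hx'' : ∀ i ∈ D, 0 ≤ x i / H ∧ x i / H ≤ 1 := by
    intro i hi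
    obtain ⟨h0, h1⟩ := hx i hi
    by_cases hH0' : H = 0
    · have : x i = 0 := le_antisymm (hH0' ▸ h1) h0
      simp [this]
    · have hHpos : 0 < H := lt_of_le_of_ne (le_trans h0 h1) (Ne.symm hH0')
      exact ⟨div_nonneg h0 hHpos.le, (div_le_one hHpos).mpr h1⟩
  have hnn2 : 0 ≤ Exp D (fun i => x i / H) (fun B => f (T ∪ B)) :=
    Exp_nonneg hx'' (fun A => hnn _)
  nlinarith

/-- Sampling lemma, lower side: if every coordinate is at least `L` on `D`,
    `E[f(A ∪ C)] ≥ L f(D ∪ C) + (1-L) E[f(A' ∪ C)]` with rescaled probabilities. -/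
lemma lemB {f : Finset (Fin n) → ℝ} (hf : Submodular f) {L : ℝ} (hL0 : 0 ≤ L) :
    ∀ D : Finset (Fin n), ∀ C : Finset (Fin n),
      ∀ x : Fin n → ℝ, (∀ i ∈ D, L ≤ x i ∧ x i ≤ 1) →
      L * f (D ∪ C) + (1 - L) * Exp D (fun i => (x i - L) / (1 - L)) (fun A => f (A ∪ C))
        ≤ Exp D x (fun A => f (A ∪ C)) := by
  intro D
  induction D using Finset.induction_on with
  | empty =>
      intro C x _
      rw [Exp_empty, Exp_empty]
      have : (∅ : Finset (Fin n)) ∪ C = C := Finset.empty_union C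
      rw [this]
      nlinarith [le_refl (f C)]
  | @insert u D' hu ih =>
      intro C x hx
      have hxu := hx u (Finset.mem_insert_self u D')
      have hx' : ∀ i ∈ D', L ≤ x i ∧ x i ≤ 1 := fun i hi => hx i (Finset.mem_insert_of_mem hi)
      have hx'' : ∀ i ∈ D', 0 ≤ (x i - L) / (1 - L) ∧ (x i - L) / (1 - L) ≤ 1 := by
        intro i hi
        obtain ⟨h0, h1⟩ := hx' i hi
        by_cases hL1 : L = 1
        · have : x i = 1 := le_antisymm h1 (hL1 ▸ h0)
          simp [this, hL1]
        · have hLpos : 0 < 1 - L := by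
            have : L ≤ 1 := le_trans h0 h1
            cases lt_or_eq_of_le this with
            | inl h => linarith
            | inr h => exact absurd h hL1
          constructor
          · apply div_nonneg _ hLpos.le; linarith
          · rw [div_le_one hLpos]; linarith
      have hfun : (fun A => f (insert u A ∪ C)) = (fun A => f (A ∪ insert u C)) := by
        funext A
        rw [Finset.insert_union, Finset.union_insert]
      rw [Exp_insert hu x, Exp_insert hu (fun i => (x i - L) / (1 - L)), hfun]
      have I1 := ih C x hx'
      have I2 := ih (insert u C) x hx'
      have hDC : D' ∪ insert u C = insert u D' ∪ C := by
        rw [Finset.union_insert, Finset.insert_union]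
      rw [hDC] at I2
      set x'' : Fin n → ℝ := fun i => (x i - L) / (1 - L) with hx''def
      set P := Exp D' x'' (fun A => f (A ∪ C)) with hP
      set Q := Exp D' x'' (fun A => f (A ∪ insert u C)) with hQ
      set X0 := Exp D' x (fun A => f (A ∪ C)) with hX0
      set X1 := Exp D' x (fun A => f (A ∪ insert u C)) with hX1
      have key : P + (f (insert u D' ∪ C) - f (D' ∪ C)) ≤ Q := by
        have := Exp_mono (x := x'') hx''
          (g := fun A => f (A ∪ C) + (f (insert u D' ∪ C) - f (D' ∪ C)))
          (h := fun A => f (A ∪ insert u C))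
          (fun A hA => subadd' hf hu hA)
        rwa [Exp_add, Exp_const] at this
      have hpL : (1 - L) * ((x u - L) / (1 - L)) = x u - L := by
        by_cases hL1 : L = 1
        · have : x u = 1 := le_antisymm hxu.2 (hL1 ▸ hxu.1)
          simp [this, hL1]
        · have : (1 : ℝ) - L ≠ 0 := fun h => hL1 (by linarith)
          field_simp
      have expand : (1 - L) * ((1 - (x u - L) / (1 - L)) * P + (x u - L) / (1 - L) * Q)
          = (1 - x u) * P + (x u - L) * Q := by
        have h2 : (1 - L) * (1 - (x u - L) / (1 - L)) = 1 - x u := by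
          rw [mul_sub, hpL, mul_one]; ring
        calc (1 - L) * ((1 - (x u - L) / (1 - L)) * P + (x u - L) / (1 - L) * Q)
            = ((1 - L) * (1 - (x u - L) / (1 - L))) * P
              + ((1 - L) * ((x u - L) / (1 - L))) * Q := by ring
          _ = (1 - x u) * P + (x u - L) * Q := by rw [hpL, h2]
      rw [expand]
      have c1 : 0 ≤ 1 - x u := by linarith [hxu.2]
      have c2 : 0 ≤ L * (1 - x u) := mul_nonneg hL0 c1
      have t1 := mul_le_mul_of_nonneg_left I1 c1
      have t2' := mul_le_mul_of_nonneg_left I2 (le_trans hL0 hxu.1)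
      have t3 := mul_le_mul_of_nonneg_left key c2
      nlinarith [t1, t2', t3]

lemma corB {f : Finset (Fin n) → ℝ} (hf : Submodular f) (hnn : ∀ S, 0 ≤ f S)
    {L : ℝ} (hL0 : 0 ≤ L) (hL1 : L ≤ 1) (D C : Finset (Fin n))
    (x : Fin n → ℝ) (hx : ∀ i ∈ D, L ≤ x i ∧ x i ≤ 1) :
    L * f (D ∪ C) ≤ Exp D x (fun A => f (A ∪ C)) := by
  have h := lemB hf hL0 D C x hx
  have hx'' : ∀ i ∈ D, 0 ≤ (x i - L) / (1 - L) ∧ (x i - L) / (1 - L) ≤ 1 := by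
    intro i hi
    obtain ⟨h0, h1⟩ := hx i hi
    by_cases hL1' : L = 1
    · have : x i = 1 := le_antisymm h1 (hL1' ▸ h0)
      simp [this, hL1']
    · have hLpos : 0 < 1 - L := by
        cases lt_or_eq_of_le hL1 with
        | inl h' => linarith
        | inr h' => exact absurd h' hL1'
      constructor
      · apply div_nonneg _ hLpos.le; linarith
      · rw [div_le_one hLpos]; linarith
  have hnn2 : 0 ≤ Exp D (fun i => (x i - L) / (1 - L)) (fun A => f (A ∪ C)) :=
    Exp_nonneg hx'' (fun A => hnn _)
  nlinarith

lemma multilinear_eq_Exp (f : Finset (Fin n) → ℝ) (x : Fin n → ℝ) :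
    multilinear f x = Exp Finset.univ x f := by
  unfold multilinear Exp
  rw [Finset.powerset_univ]
  exact Finset.sum_congr rfl fun S _ => by rw [Finset.compl_eq_univ_sdiff]

end Stmt5Aux

open Stmt5Aux in
theorem stmt_5 {n : ℕ} (f : Finset (Fin n) → ℝ) (hf : Submodular f)
    (hnonneg : ∀ S, 0 ≤ f S) (Sstar : Finset (Fin n))
    (hSstar : ∀ T, f T ≤ f Sstar)
    (L H : ℝ) (hL : 0 ≤ L) (hLH : L ≤ H) (hH : H ≤ 1)
    (x : Fin n → ℝ) (hx : ∀ i, L ≤ x i ∧ x i ≤ H) :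
    L * (1 - H) * f Sstar ≤ multilinear f x := by
  have hL1 : L ≤ 1 := le_trans hLH hH
  have hdisj : Disjoint Sstar Sstarᶜ := disjoint_compl_right
  have huniv : Sstar ∪ Sstarᶜ = Finset.univ := Finset.union_compl Sstar
  rw [multilinear_eq_Exp, ← huniv, Exp_union Sstar Sstarᶜ hdisj]
  have hxc : ∀ i ∈ Sstarᶜ, 0 ≤ x i ∧ x i ≤ 1 :=
    fun i _ => ⟨le_trans hL (hx i).1, le_trans (hx i).2 hH⟩
  have step1 : ∀ B ⊆ Sstarᶜ, L * f (Sstar ∪ B) ≤ Exp Sstar x (fun A => f (A ∪ B)) := by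
    intro B _
    exact corB hf hnonneg hL hL1 Sstar B x
      (fun i _ => ⟨(hx i).1, le_trans (hx i).2 hH⟩)
  have step2 : Exp Sstarᶜ x (fun B => L * f (Sstar ∪ B))
      ≤ Exp Sstarᶜ x (fun B => Exp Sstar x (fun A => f (A ∪ B))) :=
    Exp_mono hxc step1
  rw [Exp_smul] at step2
  have step3 : (1 - H) * f Sstar ≤ Exp Sstarᶜ x (fun B => f (Sstar ∪ B)) :=
    corA hf hnonneg (le_trans hL hLH) hH Sstarᶜ Sstar disjoint_compl_left x
      (fun i _ => ⟨le_trans hL (hx i).1, (hx i).2⟩)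
  have step4 : L * ((1 - H) * f Sstar) ≤ L * Exp Sstarᶜ x (fun B => f (Sstar ∪ B)) :=
    mul_le_mul_of_nonneg_left step3 hL
  calc L * (1 - H) * f Sstar = L * ((1 - H) * f Sstar) := by ring
    _ ≤ L * Exp Sstarᶜ x (fun B => f (Sstar ∪ B)) := step4
    _ ≤ Exp Sstarᶜ x (fun B => Exp Sstar x (fun A => f (A ∪ B))) := step2
end

section
/- Let f be a non-negative submodular function on subsets of [n], and fix sets S, T ⊆ [n]. If T_{1/2} is a random subset of T including each element of T independently with probability 1/2, then E[f((S \ T) ∪ T_{1/2})] ≥ (1/4)·f(S). -/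
open Finset

theorem stmt_9 {n : ℕ} (f : Finset (Fin n) → ℝ) (hf : Submodular f)
    (hnonneg : ∀ S, 0 ≤ f S) (S T : Finset (Fin n)) :
    (1 / 4 : ℝ) * f S ≤
      ∑ T' ∈ T.powerset, (1 / 2 ^ T.card : ℝ) * f ((S \ T) ∪ T') := by
  set c : ℝ := 1 / 2 ^ T.card with hc
  have hcpos : (0:ℝ) ≤ c := by positivity
  -- reindexing by symmetric difference with a fixed subset of T
  have reindex : ∀ (A : Finset (Fin n)) (F : Finset (Fin n) → ℝ), A ⊆ T →
      ∑ T' ∈ T.powerset, F T' = ∑ T' ∈ T.powerset, F (symmDiff T' A) := by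
    intro A F hA
    refine Finset.sum_nbij' (fun T' => symmDiff T' A) (fun T' => symmDiff T' A) ?_ ?_ ?_ ?_ ?_
    · intro a ha
      simp only [Finset.mem_powerset] at ha ⊢
      exact le_trans symmDiff_le_sup (sup_le ha hA)
    · intro a ha
      simp only [Finset.mem_powerset] at ha ⊢
      exact le_trans symmDiff_le_sup (sup_le ha hA)
    · intro a _; exact symmDiff_symmDiff_cancel_right A a
    · intro a _; exact symmDiff_symmDiff_cancel_right A a
    · intro a _; rw [symmDiff_symmDiff_cancel_right A a]
  -- total mass is 1
  have hmass : ∑ _T' ∈ T.powerset, c = 1 := by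
    rw [Finset.sum_const, Finset.card_powerset, nsmul_eq_mul, hc]
    field_simp
    norm_cast
  -- step A : f (S ∪ T') ≤ f (S\T ∪ T') + f (S\T ∪ (symmDiff T' (S ∩ T)))
  have keyA : ∀ T' ∈ T.powerset,
      f (S ∪ T') ≤ f ((S \ T) ∪ T') + f ((S \ T) ∪ (symmDiff T' (S ∩ T))) := by
    intro T' hT'
    rw [Finset.mem_powerset] at hT'
    have hsub := hf ((S \ T) ∪ T') ((S \ T) ∪ (symmDiff T' (S ∩ T)))
    have hunion : ((S \ T) ∪ T') ∪ ((S \ T) ∪ (symmDiff T' (S ∩ T))) = S ∪ T' := by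
      ext x
      have hx : x ∈ T' → x ∈ T := fun h => hT' h
      simp only [Finset.mem_union, Finset.mem_sdiff, Finset.mem_symmDiff,
        Finset.mem_inter]
      tauto
    nlinarith [hnonneg (((S \ T) ∪ T') ∩ ((S \ T) ∪ (symmDiff T' (S ∩ T)))), hunion ▸ hsub]
  -- step B : f S ≤ f (S ∪ T') + f (S ∪ (symmDiff T' (T \ S)))
  have keyB : ∀ T' ∈ T.powerset,
      f S ≤ f (S ∪ T') + f (S ∪ (symmDiff T' (T \ S))) := by
    intro T' hT'
    rw [Finset.mem_powerset] at hT'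
    have hsub := hf (S ∪ T') (S ∪ (symmDiff T' (T \ S)))
    have hinter : (S ∪ T') ∩ (S ∪ (symmDiff T' (T \ S))) = S := by
      ext x
      have hx : x ∈ T' → x ∈ T := fun h => hT' h
      simp only [Finset.mem_union, Finset.mem_sdiff, Finset.mem_symmDiff,
        Finset.mem_inter]
      tauto
    nlinarith [hnonneg ((S ∪ T') ∪ (S ∪ (symmDiff T' (T \ S)))), hinter ▸ hsub]
  -- combine
  have step1 : ∑ T' ∈ T.powerset, c * f (S ∪ T') ≤
      2 * ∑ T' ∈ T.powerset, c * f ((S \ T) ∪ T') := by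
    have h2 : ∑ T' ∈ T.powerset, c * f ((S \ T) ∪ T') =
        ∑ T' ∈ T.powerset, c * f ((S \ T) ∪ (symmDiff T' (S ∩ T))) :=
      reindex (S ∩ T) (fun T' => c * f ((S \ T) ∪ T')) inter_subset_right
    calc ∑ T' ∈ T.powerset, c * f (S ∪ T')
        ≤ ∑ T' ∈ T.powerset, (c * f ((S \ T) ∪ T') + c * f ((S \ T) ∪ (symmDiff T' (S ∩ T)))) := by
          refine Finset.sum_le_sum fun T' hT' => ?_
          have := keyA T' hT'
          nlinarith
      _ = 2 * ∑ T' ∈ T.powerset, c * f ((S \ T) ∪ T') := by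
          rw [Finset.sum_add_distrib, ← h2]; ring
  have step2 : f S ≤ 2 * ∑ T' ∈ T.powerset, c * f (S ∪ T') := by
    have h2 : ∑ T' ∈ T.powerset, c * f (S ∪ T') =
        ∑ T' ∈ T.powerset, c * f (S ∪ (symmDiff T' (T \ S))) :=
      reindex (T \ S) (fun T' => c * f (S ∪ T')) sdiff_subset
    calc f S = ∑ T' ∈ T.powerset, c * f S := by
          rw [← Finset.sum_mul, hmass, one_mul]
      _ ≤ ∑ T' ∈ T.powerset, (c * f (S ∪ T') + c * f (S ∪ (symmDiff T' (T \ S)))) := by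
          refine Finset.sum_le_sum fun T' hT' => ?_
          have := keyB T' hT'
          nlinarith
      _ = 2 * ∑ T' ∈ T.powerset, c * f (S ∪ T') := by
          rw [Finset.sum_add_distrib, ← h2]; ring
  linarith
end

section
/- For any non-negative submodular function f on subsets of [n] and any x ∈ [0,1]^n, the concave closure satisfies f⁺(x) ≤ 4·f*_{1/2}(x), where f*_{1/2}(x) = min_{S ⊆ [n]} E_{T ∼ 1_S/2}[f(T) + ∑_{i ∉ S} (f(T ∪ {i}) − f(T))·x_i]. -/
open Finset

/-- f*_{1/2}(x) = min over S of E_{T ~ 1_S/2}[ f(T) + ∑_{i ∉ S} (f(T ∪ {i}) − f(T)) x_i ]. -/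
noncomputable def fstarHalf {n : ℕ} (f : Finset (Fin n) → ℝ) (x : Fin n → ℝ) : ℝ :=
  (Finset.univ : Finset (Finset (Fin n))).inf' ⟨∅, Finset.mem_univ _⟩
    (fun S => ∑ T ∈ S.powerset, (1 / 2 ^ S.card : ℝ) *
      (f T + ∑ i ∈ Sᶜ, (f (insert i T) - f T) * x i))


lemma submod_union {n : ℕ} (f : Finset (Fin n) → ℝ) (hf : Submodular f)
    (A B D : Finset (Fin n)) :
    f ((A ∪ B) ∪ D) + f ((A ∩ B) ∪ D) ≤ f (A ∪ D) + f (B ∪ D) := by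
  have h := hf (A ∪ D) (B ∪ D)
  have h1 : (A ∪ D) ∪ (B ∪ D) = (A ∪ B) ∪ D := by ext i; simp; tauto
  have h2 : (A ∪ D) ∩ (B ∪ D) = (A ∩ B) ∪ D := by ext i; simp; tauto
  rw [h1, h2] at h; exact h

lemma sum_marg {n : ℕ} (f : Finset (Fin n) → ℝ) (hf : Submodular f) :
    ∀ (A T : Finset (Fin n)), Disjoint A T →
      f (T ∪ A) - f T ≤ ∑ i ∈ A, (f (insert i T) - f T) := by
  intro A
  induction A using Finset.induction_on with
  | empty => intro T _; simp
  | @insert a A ha ih =>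
    intro T hdisj
    have haT : a ∉ T := by
      intro h
      exact (Finset.disjoint_left.mp hdisj (Finset.mem_insert_self a A)) h
    have hAT : Disjoint A T :=
      hdisj.mono_left (Finset.subset_insert a A)
    rw [Finset.sum_insert ha]
    have h1 := ih T hAT
    have e1 : T ∪ insert a A = insert a (T ∪ A) := by ext; simp only [mem_union, mem_insert]; tauto
    rw [e1]
    have h2 := hf (insert a T) (T ∪ A)
    have e2 : insert a T ∪ (T ∪ A) = insert a (T ∪ A) := by ext; simp only [mem_union, mem_insert]; tauto
    have e3 : insert a T ∩ (T ∪ A) = T := by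
      ext i
      simp only [mem_inter, mem_insert, mem_union]
      constructor
      · rintro ⟨h1' | h1', h2' | h2'⟩
        · exact absurd (h1' ▸ h2') haT
        · exact absurd (h1' ▸ h2') ha
        · exact h1'
        · exact h1'
      · intro h; exact ⟨Or.inr h, Or.inl h⟩
    rw [e2, e3] at h2
    linarith

lemma sum_powerset_symm {n : ℕ} (S A : Finset (Fin n)) (hA : A ⊆ S) (h : Finset (Fin n) → ℝ) :
    ∑ T ∈ S.powerset, h T = ∑ T ∈ S.powerset, h ((T \ A) ∪ (A \ T)) := by
  refine Finset.sum_nbij' (i := fun T => (T \ A) ∪ (A \ T)) (j := fun T => (T \ A) ∪ (A \ T))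
    ?_ ?_ ?_ ?_ ?_
  · intro T hT
    rw [Finset.mem_powerset] at *
    intro i hi
    rcases Finset.mem_union.mp hi with h' | h'
    · exact hT (Finset.mem_sdiff.mp h').1
    · exact hA (Finset.mem_sdiff.mp h').1
  · intro T hT
    rw [Finset.mem_powerset] at *
    intro i hi
    rcases Finset.mem_union.mp hi with h' | h'
    · exact hT (Finset.mem_sdiff.mp h').1
    · exact hA (Finset.mem_sdiff.mp h').1
  · intro T _; ext i; simp only [mem_union, mem_sdiff]; tauto
  · intro T _; ext i; simp only [mem_union, mem_sdiff]; tauto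
  · intro T _
    congr 1
    ext i; simp only [mem_union, mem_sdiff]; tauto

lemma key_lemma {n : ℕ} (f : Finset (Fin n) → ℝ) (hf : Submodular f) (hnn : ∀ S, 0 ≤ f S)
    (S C D : Finset (Fin n)) (hC : C ⊆ S) :
    (2 ^ S.card : ℝ) * f (C ∪ D) ≤ 4 * ∑ T ∈ S.powerset, f (T ∪ D) := by
  -- h1 : ∑ f((T∩C)∪D) ≤ 2 * ∑ f(T∪D)
  have h1 : ∑ T ∈ S.powerset, f ((T ∩ C) ∪ D) ≤ 2 * ∑ T ∈ S.powerset, f (T ∪ D) := by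
    have hpt : ∀ T ∈ S.powerset,
        f ((T ∩ C) ∪ D) ≤ f (T ∪ D) + f (((T \ (S \ C)) ∪ ((S \ C) \ T)) ∪ D) := by
      intro T hT
      rw [Finset.mem_powerset] at hT
      set σT := (T \ (S \ C)) ∪ ((S \ C) \ T) with hσ
      have hTS : ∀ i, i ∈ T → i ∈ S := fun i hi => hT hi
      have hint : T ∩ σT = T ∩ C := by
        ext i
        have := hTS i
        simp only [hσ, mem_inter, mem_union, mem_sdiff]
        tauto
      have h := submod_union f hf T σT D
      rw [hint] at h
      have := hnn ((T ∪ σT) ∪ D)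
      linarith
    calc ∑ T ∈ S.powerset, f ((T ∩ C) ∪ D)
        ≤ ∑ T ∈ S.powerset, (f (T ∪ D) + f (((T \ (S \ C)) ∪ ((S \ C) \ T)) ∪ D)) :=
          Finset.sum_le_sum hpt
      _ = ∑ T ∈ S.powerset, f (T ∪ D)
            + ∑ T ∈ S.powerset, f (((T \ (S \ C)) ∪ ((S \ C) \ T)) ∪ D) := by
          rw [Finset.sum_add_distrib]
      _ = 2 * ∑ T ∈ S.powerset, f (T ∪ D) := by
          rw [← sum_powerset_symm S (S \ C) (Finset.sdiff_subset) (fun T => f (T ∪ D))]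
          ring
  -- h2 : 2^|S| * f(C∪D) ≤ 2 * ∑ f((T∩C)∪D)
  have h2 : (2 ^ S.card : ℝ) * f (C ∪ D) ≤ 2 * ∑ T ∈ S.powerset, f ((T ∩ C) ∪ D) := by
    have hpt : ∀ T ∈ S.powerset,
        f (C ∪ D) ≤ f ((T ∩ C) ∪ D) + f (((T \ C) ∪ (C \ T)) ∩ C ∪ D) := by
      intro T _
      have e1 : ((T \ C) ∪ (C \ T)) ∩ C = C \ T := by
        ext i; simp only [mem_inter, mem_union, mem_sdiff]; tauto
      rw [e1]
      have h := submod_union f hf (T ∩ C) (C \ T) D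
      have e2 : (T ∩ C) ∪ (C \ T) = C := by
        ext i; simp only [mem_inter, mem_union, mem_sdiff]; tauto
      have e3 : (T ∩ C) ∩ (C \ T) = ∅ := by
        ext i; simp only [mem_inter, mem_sdiff, notMem_empty]; tauto
      rw [e2, e3] at h
      have h4 := hnn (∅ ∪ D)
      linarith
    have hsum : ∑ T ∈ S.powerset, f (C ∪ D)
        ≤ ∑ T ∈ S.powerset, (f ((T ∩ C) ∪ D) + f (((T \ C) ∪ (C \ T)) ∩ C ∪ D)) :=
      Finset.sum_le_sum hpt
    have hconst : ∑ T ∈ S.powerset, f (C ∪ D) = (2 ^ S.card : ℝ) * f (C ∪ D) := by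
      rw [Finset.sum_const, Finset.card_powerset]
      simp [nsmul_eq_mul]
    have hbij : ∑ T ∈ S.powerset, f (((T \ C) ∪ (C \ T)) ∩ C ∪ D)
        = ∑ T ∈ S.powerset, f ((T ∩ C) ∪ D) := by
      rw [← sum_powerset_symm S C hC (fun T => f ((T ∩ C) ∪ D))]
    rw [Finset.sum_add_distrib, hbij, hconst] at hsum
    linarith
  linarith

theorem stmt_10 {n : ℕ} (f : Finset (Fin n) → ℝ) (hf : Submodular f)
    (hnonneg : ∀ S, 0 ≤ f S) (x : Fin n → ℝ) (hx : ∀ i, 0 ≤ x i ∧ x i ≤ 1)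
    (α : Finset (Fin n) → ℝ) (hα : ∀ S, 0 ≤ α S)
    (hα1 : ∑ S : Finset (Fin n), α S = 1)
    (hmarg : ∀ i, ∑ S ∈ Finset.univ.filter (fun S => i ∈ S), α S = x i) :
    ∑ S : Finset (Fin n), α S * f S ≤ 4 * fstarHalf f x := by
  have key4 : ∀ S : Finset (Fin n),
      (∑ R : Finset (Fin n), α R * f R) / 4 ≤
      ∑ T ∈ S.powerset, (1 / 2 ^ S.card : ℝ) *
        (f T + ∑ i ∈ Sᶜ, (f (insert i T) - f T) * x i) := by
    intro S
    -- Step 1: pointwise lower bound on the bracket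
    have step1 : ∀ T ∈ S.powerset,
        ∑ R : Finset (Fin n), α R * f (T ∪ (R \ S)) ≤
        f T + ∑ i ∈ Sᶜ, (f (insert i T) - f T) * x i := by
      intro T hT
      rw [Finset.mem_powerset] at hT
      have swap : ∑ i ∈ Sᶜ, (f (insert i T) - f T) * x i
          = ∑ R : Finset (Fin n), α R * ∑ i ∈ R \ S, (f (insert i T) - f T) := by
        calc ∑ i ∈ Sᶜ, (f (insert i T) - f T) * x i
            = ∑ i ∈ Sᶜ, ∑ R ∈ univ.filter (fun R => i ∈ R),
                (f (insert i T) - f T) * α R := by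
              refine Finset.sum_congr rfl fun i _ => ?_
              rw [← hmarg i, Finset.mul_sum]
          _ = ∑ i ∈ Sᶜ, ∑ R : Finset (Fin n),
                if i ∈ R then (f (insert i T) - f T) * α R else 0 := by
              refine Finset.sum_congr rfl fun i _ => ?_
              rw [Finset.sum_filter]
          _ = ∑ R : Finset (Fin n), ∑ i ∈ Sᶜ,
                if i ∈ R then (f (insert i T) - f T) * α R else 0 := Finset.sum_comm
          _ = ∑ R : Finset (Fin n), α R * ∑ i ∈ R \ S, (f (insert i T) - f T) := by
              refine Finset.sum_congr rfl fun R _ => ?_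
              rw [← Finset.sum_filter]
              have e : Sᶜ.filter (fun i => i ∈ R) = R \ S := by
                ext i
                simp only [Finset.mem_filter, Finset.mem_compl, Finset.mem_sdiff]
                tauto
              rw [e, ← Finset.sum_mul, mul_comm]
      rw [swap]
      have hle : ∀ R ∈ (univ : Finset (Finset (Fin n))),
          α R * (f (T ∪ (R \ S)) - f T) ≤ α R * ∑ i ∈ R \ S, (f (insert i T) - f T) := by
        intro R _
        refine mul_le_mul_of_nonneg_left ?_ (hα R)
        refine sum_marg f hf (R \ S) T ?_
        exact Finset.disjoint_left.mpr fun i hi hiT => (Finset.mem_sdiff.mp hi).2 (hT hiT)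
      have hsum := Finset.sum_le_sum hle
      have expand : ∑ R : Finset (Fin n), α R * (f (T ∪ (R \ S)) - f T)
          = ∑ R : Finset (Fin n), α R * f (T ∪ (R \ S)) - f T := by
        simp_rw [mul_sub]
        rw [Finset.sum_sub_distrib, ← Finset.sum_mul, hα1, one_mul]
      rw [expand] at hsum
      linarith
    -- Step 2: sum over T with weights
    have step2 : ∑ T ∈ S.powerset, (1 / 2 ^ S.card : ℝ) *
          (∑ R : Finset (Fin n), α R * f (T ∪ (R \ S)))
        ≤ ∑ T ∈ S.powerset, (1 / 2 ^ S.card : ℝ) *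
          (f T + ∑ i ∈ Sᶜ, (f (insert i T) - f T) * x i) := by
      refine Finset.sum_le_sum fun T hT => ?_
      exact mul_le_mul_of_nonneg_left (step1 T hT) (by positivity)
    have comm : ∑ T ∈ S.powerset, (1 / 2 ^ S.card : ℝ) *
          (∑ R : Finset (Fin n), α R * f (T ∪ (R \ S)))
        = ∑ R : Finset (Fin n), α R *
          ((1 / 2 ^ S.card : ℝ) * ∑ T ∈ S.powerset, f (T ∪ (R \ S))) := by
      simp_rw [Finset.mul_sum]
      rw [Finset.sum_comm]
      exact Finset.sum_congr rfl fun R _ => Finset.sum_congr rfl fun T _ => by ring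
    -- Step 3: per-R bound from key lemma
    have step3 : ∀ R ∈ (univ : Finset (Finset (Fin n))),
        α R * (f R / 4) ≤ α R *
          ((1 / 2 ^ S.card : ℝ) * ∑ T ∈ S.powerset, f (T ∪ (R \ S))) := by
      intro R _
      refine mul_le_mul_of_nonneg_left ?_ (hα R)
      have hkey := key_lemma f hf hnonneg S (R ∩ S) (R \ S) (Finset.inter_subset_right)
      have e : (R ∩ S) ∪ (R \ S) = R := by
        ext i; simp only [mem_union, mem_inter, mem_sdiff]; tauto
      rw [e] at hkey
      have hp : (0 : ℝ) < 2 ^ S.card := by positivity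
      rw [one_div, ← div_eq_inv_mul, div_le_div_iff₀ (by norm_num) hp]
      linarith
    have hfinal := Finset.sum_le_sum step3
    have e4 : ∑ R : Finset (Fin n), α R * (f R / 4)
        = (∑ R : Finset (Fin n), α R * f R) / 4 := by
      rw [Finset.sum_div]
      exact Finset.sum_congr rfl fun R _ => by ring
    rw [e4] at hfinal
    rw [comm] at step2
    linarith
  have hinf := Finset.le_inf' (⟨∅, Finset.mem_univ _⟩ :
      (Finset.univ : Finset (Finset (Fin n))).Nonempty)
    (f := fun S => ∑ T ∈ S.powerset, (1 / 2 ^ S.card : ℝ) *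
      (f T + ∑ i ∈ Sᶜ, (f (insert i T) - f T) * x i))
    (a := (∑ R : Finset (Fin n), α R * f R) / 4)
    (fun S _ => key4 S)
  unfold fstarHalf
  linarith
end

section
/- For any non-negative set function f on subsets of [n] and any x ∈ [0,1]^n, the multilinear extension F satisfies F(x/2) ≤ F_max(x), where F_max is the multilinear extension of f_max(S) = max_{T ⊆ S} f(T). -/
open Finset

noncomputable def fmax {n : ℕ} (f : Finset (Fin n) → ℝ) (S : Finset (Fin n)) : ℝ :=
  S.powerset.sup' ⟨∅, by simp⟩ f

lemma weight_half {n : ℕ} (x : Fin n → ℝ) (T : Finset (Fin n)) :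
    (∏ i ∈ T, x i / 2) * (∏ i ∈ Tᶜ, (1 - x i / 2))
      = ∑ S ∈ Finset.univ.filter (fun S : Finset (Fin n) => T ⊆ S),
          (∏ i ∈ S, x i) * (∏ i ∈ Sᶜ, (1 - x i)) * (1 / 2) ^ S.card := by
  have h1 : ∀ i : Fin n, (1 - x i / 2) = x i / 2 + (1 - x i) := by intro i; ring
  calc (∏ i ∈ T, x i / 2) * (∏ i ∈ Tᶜ, (1 - x i / 2))
      = (∏ i ∈ T, x i / 2) * ∑ U ∈ Tᶜ.powerset,
          (∏ i ∈ U, x i / 2) * ∏ i ∈ Tᶜ \ U, (1 - x i) := by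
        rw [show (∏ i ∈ Tᶜ, (1 - x i / 2)) = ∏ i ∈ Tᶜ, (x i / 2 + (1 - x i)) by
              exact Finset.prod_congr rfl (fun i _ => h1 i),
            Finset.prod_add]
    _ = ∑ U ∈ Tᶜ.powerset,
          (∏ i ∈ T ∪ U, x i) * (∏ i ∈ (T ∪ U)ᶜ, (1 - x i)) * (1 / 2) ^ (T ∪ U).card := by
        rw [Finset.mul_sum]
        refine Finset.sum_congr rfl (fun U hU => ?_)
        have hUc : U ⊆ Tᶜ := Finset.mem_powerset.mp hU
        have hdisj : Disjoint T U := Finset.disjoint_left.mpr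
          (fun i hiT hiU => (Finset.mem_compl.mp (hUc hiU)) hiT)
        have hcomp : (T ∪ U)ᶜ = Tᶜ \ U := by
          ext i; simp only [Finset.mem_compl, Finset.mem_union, Finset.mem_sdiff]; tauto
        have hhalf : ∀ (V : Finset (Fin n)), (∏ i ∈ V, x i / 2)
            = (∏ i ∈ V, x i) * (1 / 2) ^ V.card := by
          intro V
          calc ∏ i ∈ V, x i / 2 = ∏ i ∈ V, (x i * (1 / 2)) :=
                Finset.prod_congr rfl (fun i _ => by ring)
            _ = (∏ i ∈ V, x i) * (1 / 2) ^ V.card := by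
                rw [Finset.prod_mul_distrib, Finset.prod_const]
        rw [hcomp, Finset.prod_union hdisj, Finset.card_union_of_disjoint hdisj,
            hhalf T, hhalf U, pow_add]
        ring
    _ = ∑ S ∈ Finset.univ.filter (fun S : Finset (Fin n) => T ⊆ S),
          (∏ i ∈ S, x i) * (∏ i ∈ Sᶜ, (1 - x i)) * (1 / 2) ^ S.card := by
        apply Finset.sum_nbij' (fun U => T ∪ U) (fun S => S \ T)
        · intro U hU
          simp only [Finset.mem_filter, Finset.mem_univ, true_and]
          exact Finset.subset_union_left
        · intro S hS
          simp only [Finset.mem_powerset]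
          intro i hi
          simp only [Finset.mem_sdiff] at hi
          simp [hi.2]
        · intro U hU
          have hUc : U ⊆ Tᶜ := Finset.mem_powerset.mp hU
          exact Finset.union_sdiff_cancel_left (Finset.disjoint_left.mpr
            (fun i hiT hiU => (Finset.mem_compl.mp (hUc hiU)) hiT))
        · intro S hS
          simp only [Finset.mem_filter] at hS
          exact Finset.union_sdiff_of_subset hS.2
        · intro U hU; rfl

theorem stmt_11 {n : ℕ} (f : Finset (Fin n) → ℝ) (hnonneg : ∀ S, 0 ≤ f S)
    (x : Fin n → ℝ) (hx : ∀ i, 0 ≤ x i ∧ x i ≤ 1) :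
    multilinear f (fun i => x i / 2) ≤ multilinear (fmax f) x := by
  unfold multilinear
  have hw : ∀ S : Finset (Fin n), 0 ≤ (∏ i ∈ S, x i) * (∏ i ∈ Sᶜ, (1 - x i)) := by
    intro S
    apply mul_nonneg
    · exact Finset.prod_nonneg (fun i _ => (hx i).1)
    · exact Finset.prod_nonneg (fun i _ => by linarith [(hx i).2])
  calc ∑ T : Finset (Fin n), (∏ i ∈ T, x i / 2) * (∏ i ∈ Tᶜ, (1 - x i / 2)) * f T
      = ∑ T : Finset (Fin n), ∑ S ∈ Finset.univ.filter (fun S : Finset (Fin n) => T ⊆ S),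
          (∏ i ∈ S, x i) * (∏ i ∈ Sᶜ, (1 - x i)) * (1 / 2) ^ S.card * f T := by
        refine Finset.sum_congr rfl (fun T _ => ?_)
        rw [weight_half, Finset.sum_mul]
    _ = ∑ S : Finset (Fin n), ∑ T ∈ S.powerset,
          (∏ i ∈ S, x i) * (∏ i ∈ Sᶜ, (1 - x i)) * (1 / 2) ^ S.card * f T := by
        rw [Finset.sum_comm' (s := Finset.univ) (t := fun T => Finset.univ.filter
              (fun S : Finset (Fin n) => T ⊆ S)) (t' := Finset.univ)
              (s' := fun S => S.powerset)]
        intro T S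
        simp [Finset.mem_powerset]
    _ ≤ ∑ S : Finset (Fin n), (∏ i ∈ S, x i) * (∏ i ∈ Sᶜ, (1 - x i)) * fmax f S := by
        apply Finset.sum_le_sum
        intro S _
        have hmax : ∀ T ∈ S.powerset, f T ≤ fmax f S := fun T hT =>
          Finset.le_sup' f hT
        calc ∑ T ∈ S.powerset,
              (∏ i ∈ S, x i) * (∏ i ∈ Sᶜ, (1 - x i)) * (1 / 2) ^ S.card * f T
            ≤ ∑ T ∈ S.powerset,
              (∏ i ∈ S, x i) * (∏ i ∈ Sᶜ, (1 - x i)) * (1 / 2) ^ S.card * fmax f S := by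
              apply Finset.sum_le_sum
              intro T hT
              exact mul_le_mul_of_nonneg_left (hmax T hT)
                (mul_nonneg (hw S) (by positivity))
          _ = (∏ i ∈ S, x i) * (∏ i ∈ Sᶜ, (1 - x i)) * fmax f S := by
              rw [Finset.sum_const, Finset.card_powerset, nsmul_eq_mul]
              push_cast
              have h2 : ((1:ℝ)/2) ^ S.card * (2:ℝ) ^ S.card = 1 := by
                rw [← mul_pow]; norm_num
              linear_combination
                (∏ i ∈ S, x i) * (∏ i ∈ Sᶜ, (1 - x i)) * fmax f S * h2
end

section
/- For any non-negative submodular function f on subsets of [n] and any x ∈ [0,1]^n, f*_{1/2}(x) ≤ 50·F(x/2), where F is the multilinear extension of f and f*_{1/2}(x) = min_{S ⊆ [n]} E_{T ∼ 1_S/2}[f(T) + ∑_{i ∉ S} (f(T ∪ {i}) − f(T))·x_i]. -/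
open Finset

private lemma subm_sum {n : ℕ} (f : Finset (Fin n) → ℝ) (hf : Submodular f) (T : Finset (Fin n)) :
    ∀ A, A ⊆ T → ∑ i ∈ A, (f T - f (T.erase i)) ≤ f T - f (T \ A) := by
  intro A
  induction A using Finset.induction_on with
  | empty => intro _; simp
  | @insert a A ha ih =>
    intro hsub
    have haT : a ∈ T := hsub (mem_insert_self a A)
    have hAT : A ⊆ T := (Finset.insert_subset_iff.mp hsub).2
    have h1 : (T \ A) ∪ (T.erase a) = T := by
      ext t
      simp only [mem_union, mem_sdiff, mem_erase]
      constructor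
      · rintro (⟨h, _⟩ | ⟨_, h⟩) <;> exact h
      · intro ht
        by_cases hta : t = a
        · subst hta; exact Or.inl ⟨ht, ha⟩
        · exact Or.inr ⟨hta, ht⟩
    have h2 : (T \ A) ∩ (T.erase a) = T \ (insert a A) := by
      ext t
      simp only [mem_inter, mem_sdiff, mem_erase, mem_insert]
      tauto
    have hsm := hf (T \ A) (T.erase a)
    rw [h1, h2] at hsm
    rw [Finset.sum_insert ha]
    have := ih hAT
    linarith

private lemma pos_marginal {n : ℕ} (f : Finset (Fin n) → ℝ) (hf : Submodular f)
    (hnn : ∀ S, 0 ≤ f S) (T : Finset (Fin n)) :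
    ∑ i ∈ T, max (f T - f (T.erase i)) 0 ≤ f T := by
  classical
  have h1 : ∑ i ∈ T, max (f T - f (T.erase i)) 0
      = ∑ i ∈ T.filter (fun i => 0 < f T - f (T.erase i)), (f T - f (T.erase i)) := by
    rw [Finset.sum_filter]
    refine Finset.sum_congr rfl fun i _ => ?_
    rcases lt_or_ge 0 (f T - f (T.erase i)) with h | h
    · simp [h, max_eq_left h.le]
    · simp [not_lt.mpr h, max_eq_right h]
  rw [h1]
  have h2 := subm_sum f hf T _ (Finset.filter_subset (fun i => 0 < f T - f (T.erase i)) T)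
  have h3 := hnn (T \ T.filter (fun i => 0 < f T - f (T.erase i)))
  linarith

private lemma sum_u {n : ℕ} (x : Fin n → ℝ) (T C : Finset (Fin n)) (hC : C ⊆ Tᶜ) :
    ∑ S ∈ univ.filter (fun S => T ⊆ S ∧ S ⊆ T ∪ C),
      ((∏ i ∈ S, x i / 2) * ∏ i ∈ Sᶜ, (1 - x i))
    = ((∏ i ∈ T, x i / 2) * ∏ i ∈ C, (1 - x i / 2)) * ∏ i ∈ Tᶜ \ C, (1 - x i) := by
  classical
  have key : ∀ U ∈ C.powerset,
      ((∏ i ∈ T ∪ U, x i / 2) * ∏ i ∈ (T ∪ U)ᶜ, (1 - x i))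
      = ((∏ i ∈ T, x i / 2) * ((∏ i ∈ U, x i / 2) * ∏ i ∈ C \ U, (1 - x i)))
        * ∏ i ∈ Tᶜ \ C, (1 - x i) := by
    intro U hU
    rw [Finset.mem_powerset] at hU
    have hUT : Disjoint T U := by
      rw [Finset.disjoint_left]
      intro a haT haU
      exact (Finset.mem_compl.mp (hC (hU haU))) haT
    have hcompl : (T ∪ U)ᶜ = (C \ U) ∪ (Tᶜ \ C) := by
      ext t
      simp only [mem_compl, mem_union, mem_sdiff]
      constructor
      · intro h
        push_neg at h
        by_cases htC : t ∈ C
        · exact Or.inl ⟨htC, h.2⟩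
        · exact Or.inr ⟨fun htT => h.1 htT, htC⟩
      · rintro (⟨h1, h2⟩ | ⟨h1, h2⟩) <;> push_neg <;> constructor
        · intro htT; exact (Finset.mem_compl.mp (hC h1)) htT
        · exact h2
        · exact h1
        · intro htU; exact h2 (hU htU)
    have hdisj : Disjoint (C \ U) (Tᶜ \ C) := by
      rw [Finset.disjoint_left]
      intro a ha hb
      exact (Finset.mem_sdiff.mp hb).2 (Finset.mem_sdiff.mp ha).1
    rw [Finset.prod_union hUT, hcompl, Finset.prod_union hdisj]
    ring
  rw [Finset.sum_nbij' (i := fun S => S \ T) (j := fun U => T ∪ U)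
    (t := C.powerset)
    (g := fun U => ((∏ i ∈ T, x i / 2) * ((∏ i ∈ U, x i / 2) * ∏ i ∈ C \ U, (1 - x i)))
        * ∏ i ∈ Tᶜ \ C, (1 - x i)) ?_ ?_ ?_ ?_ ?_]
  · rw [← Finset.sum_mul, ← Finset.mul_sum, ← Finset.prod_add]
    congr 1
    · congr 1
      refine Finset.prod_congr rfl fun i _ => by ring
  · intro S hS
    simp only [Finset.mem_filter, Finset.mem_univ, true_and] at hS
    rw [Finset.mem_powerset]
    intro a ha
    rw [Finset.mem_sdiff] at ha
    rcases Finset.mem_union.mp (hS.2 ha.1) with h | h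
    · exact absurd h ha.2
    · exact h
  · intro U hU
    rw [Finset.mem_powerset] at hU
    simp only [Finset.mem_filter, Finset.mem_univ, true_and]
    exact ⟨Finset.subset_union_left, Finset.union_subset_union_right hU⟩
  · intro S hS
    simp only [Finset.mem_filter, Finset.mem_univ, true_and] at hS
    exact Finset.union_sdiff_of_subset hS.1
  · intro U hU
    rw [Finset.mem_powerset] at hU
    apply Finset.union_sdiff_cancel_left
    rw [Finset.disjoint_left]
    intro a haT haU
    exact (Finset.mem_compl.mp (hC (hU haU))) haT
  · intro S hS
    simp only [Finset.mem_filter, Finset.mem_univ, true_and] at hS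
    have huni : T ∪ (S \ T) = S := Finset.union_sdiff_of_subset hS.1
    show _ = (∏ i ∈ T, x i / 2) * ((∏ i ∈ S \ T, x i / 2) * ∏ i ∈ C \ (S \ T), (1 - x i)) * ∏ i ∈ Tᶜ \ C, (1 - x i)
    rw [← key (S \ T) (by
      rw [Finset.mem_powerset]
      intro a ha
      rw [Finset.mem_sdiff] at ha
      rcases Finset.mem_union.mp (hS.2 ha.1) with h | h
      · exact absurd h ha.2
      · exact h), huni]

private lemma sum_u_all {n : ℕ} (x : Fin n → ℝ) (T : Finset (Fin n)) :
    ∑ S ∈ univ.filter (fun S => T ⊆ S),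
      ((∏ i ∈ S, x i / 2) * ∏ i ∈ Sᶜ, (1 - x i))
    = (∏ i ∈ T, x i / 2) * ∏ i ∈ Tᶜ, (1 - x i / 2) := by
  classical
  have h := sum_u x T Tᶜ subset_rfl
  rw [Finset.sdiff_self] at h
  simp only [Finset.prod_empty, mul_one] at h
  rw [← h]
  apply Finset.sum_congr _ (fun _ _ => rfl)
  apply Finset.filter_congr
  intro S _
  simp only [Finset.union_compl, Finset.subset_univ, and_true]

private lemma sum_u_avoid {n : ℕ} (x : Fin n → ℝ) (T : Finset (Fin n)) (i : Fin n)
    (hi : i ∈ Tᶜ) :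
    ∑ S ∈ univ.filter (fun S => T ⊆ S ∧ i ∉ S),
      ((∏ j ∈ S, x j / 2) * ∏ j ∈ Sᶜ, (1 - x j))
    = ((∏ j ∈ T, x j / 2) * ∏ j ∈ Tᶜ.erase i, (1 - x j / 2)) * (1 - x i) := by
  classical
  have h := sum_u x T (Tᶜ.erase i) (Finset.erase_subset i Tᶜ)
  have hset : Tᶜ \ Tᶜ.erase i = {i} := by
    ext t
    simp only [Finset.mem_sdiff, Finset.mem_erase, Finset.mem_singleton, Finset.mem_compl]
    constructor
    · rintro ⟨h1, h2⟩
      by_contra hne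
      exact h2 ⟨hne, h1⟩
    · rintro rfl
      exact ⟨Finset.mem_compl.mp hi, fun h => h.1 rfl⟩
  rw [hset, Finset.prod_singleton] at h
  rw [← h]
  apply Finset.sum_congr _ (fun _ _ => rfl)
  apply Finset.filter_congr
  intro S _
  constructor
  · rintro ⟨h1, h2⟩
    refine ⟨h1, fun a ha => ?_⟩
    by_cases haT : a ∈ T
    · exact Finset.mem_union_left _ haT
    · refine Finset.mem_union_right _ (Finset.mem_erase.mpr ⟨?_, Finset.mem_compl.mpr haT⟩)
      rintro rfl; exact h2 ha
  · rintro ⟨h1, h2⟩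
    refine ⟨h1, fun hiS => ?_⟩
    rcases Finset.mem_union.mp (h2 hiS) with h | h
    · exact (Finset.mem_compl.mp hi) h
    · exact (Finset.mem_erase.mp h).1 rfl

private lemma reindex {n : ℕ} (g : Finset (Fin n) → Fin n → ℝ) :
    ∑ T : Finset (Fin n), ∑ i ∈ Tᶜ, g T i
    = ∑ T : Finset (Fin n), ∑ i ∈ T, g (T.erase i) i := by
  classical
  rw [Finset.sum_sigma', Finset.sum_sigma']
  refine Finset.sum_nbij' (i := fun p => ⟨insert p.2 p.1, p.2⟩)
    (j := fun p => (⟨p.1.erase p.2, p.2⟩ : Σ _ : Finset (Fin n), Fin n)) ?_ ?_ ?_ ?_ ?_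
  · rintro ⟨T, a⟩ hp
    simp only [Finset.mem_sigma, Finset.mem_univ, true_and, Finset.mem_compl] at hp ⊢
    exact Finset.mem_insert_self a T
  · rintro ⟨T, a⟩ hp
    simp only [Finset.mem_sigma, Finset.mem_univ, true_and, Finset.mem_compl] at hp ⊢
    exact Finset.notMem_erase a T
  · rintro ⟨T, a⟩ hp
    simp only [Finset.mem_sigma, Finset.mem_univ, true_and, Finset.mem_compl] at hp
    simp [Finset.erase_insert hp]
  · rintro ⟨T, a⟩ hp
    simp only [Finset.mem_sigma, Finset.mem_univ, true_and] at hp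
    simp [Finset.insert_erase hp]
  · rintro ⟨T, a⟩ hp
    simp only [Finset.mem_sigma, Finset.mem_univ, true_and, Finset.mem_compl] at hp
    simp [Finset.erase_insert hp]

private lemma wshift {n : ℕ} (x : Fin n → ℝ) (T : Finset (Fin n)) (i : Fin n) (hi : i ∈ T) :
    ((∏ j ∈ T.erase i, x j / 2) * ∏ j ∈ (T.erase i)ᶜ, (1 - x j / 2)) * (x i / 2)
    = ((∏ j ∈ T, x j / 2) * ∏ j ∈ Tᶜ, (1 - x j / 2)) * (1 - x i / 2) := by
  have h1 : (∏ j ∈ T, x j / 2) = (x i / 2) * ∏ j ∈ T.erase i, x j / 2 :=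
    (Finset.mul_prod_erase T _ hi).symm
  have h2 : (T.erase i)ᶜ = insert i Tᶜ := Finset.compl_erase
  have hni : i ∉ Tᶜ := by simp [hi]
  rw [h1, h2, Finset.prod_insert hni]
  ring

private lemma main2 {n : ℕ} (f : Finset (Fin n) → ℝ) (hf : Submodular f)
    (hnn : ∀ S, 0 ≤ f S) (x : Fin n → ℝ) (hx : ∀ i, 0 ≤ x i ∧ x i ≤ 1) :
    ∑ S : Finset (Fin n), ((∏ i ∈ S, x i) * ∏ i ∈ Sᶜ, (1 - x i)) *
      (∑ T ∈ S.powerset, (1 / 2 ^ S.card : ℝ) *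
        (f T + ∑ i ∈ Sᶜ, (f (insert i T) - f T) * x i))
    ≤ 3 * multilinear f (fun i => x i / 2) := by
  classical
  have hx0 : ∀ i, 0 ≤ x i := fun i => (hx i).1
  have hx1 : ∀ i, x i ≤ 1 := fun i => (hx i).2
  have hu0 : ∀ S : Finset (Fin n), 0 ≤ (∏ i ∈ S, x i / 2) * ∏ i ∈ Sᶜ, (1 - x i) := by
    intro S
    apply mul_nonneg
    · exact Finset.prod_nonneg fun i _ => by have := hx0 i; linarith
    · exact Finset.prod_nonneg fun i _ => by have := hx1 i; linarith
  have hwY0 : ∀ T : Finset (Fin n), 0 ≤ (∏ i ∈ T, x i / 2) * ∏ i ∈ Tᶜ, (1 - x i / 2) := by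
    intro T
    apply mul_nonneg
    · exact Finset.prod_nonneg fun i _ => by have := hx0 i; linarith
    · exact Finset.prod_nonneg fun i _ => by have := hx1 i; linarith
  have hM0 : ∀ (i : Fin n) (T : Finset (Fin n)), (0:ℝ) ≤ max (f (insert i T) - f T) 0 :=
    fun _ _ => le_max_right _ _
  have hmult : multilinear f (fun i => x i / 2)
      = ∑ T : Finset (Fin n), ((∏ i ∈ T, x i / 2) * ∏ i ∈ Tᶜ, (1 - x i / 2)) * f T := by
    simp only [multilinear]
  -- Step 3 : rewrite weights
  have h3 : ∑ S : Finset (Fin n), ((∏ i ∈ S, x i) * ∏ i ∈ Sᶜ, (1 - x i)) *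
      (∑ T ∈ S.powerset, (1 / 2 ^ S.card : ℝ) *
        (f T + ∑ i ∈ Sᶜ, (f (insert i T) - f T) * x i))
      = ∑ S : Finset (Fin n), ∑ T ∈ S.powerset,
          ((∏ i ∈ S, x i / 2) * ∏ i ∈ Sᶜ, (1 - x i)) *
            (f T + ∑ i ∈ Sᶜ, (f (insert i T) - f T) * x i) := by
    refine Finset.sum_congr rfl fun S _ => ?_
    rw [Finset.mul_sum]
    refine Finset.sum_congr rfl fun T _ => ?_
    have hp : (∏ i ∈ S, x i / 2) = (∏ i ∈ S, x i) / 2 ^ S.card := by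
      rw [Finset.prod_div_distrib, Finset.prod_const]
    rw [hp]; ring
  -- Step 4 : positive parts
  have h4 : ∑ S : Finset (Fin n), ∑ T ∈ S.powerset,
          ((∏ i ∈ S, x i / 2) * ∏ i ∈ Sᶜ, (1 - x i)) *
            (f T + ∑ i ∈ Sᶜ, (f (insert i T) - f T) * x i)
      ≤ ∑ S : Finset (Fin n), ∑ T ∈ S.powerset,
          ((∏ i ∈ S, x i / 2) * ∏ i ∈ Sᶜ, (1 - x i)) *
            (f T + ∑ i ∈ Sᶜ, max (f (insert i T) - f T) 0 * x i) := by
    refine Finset.sum_le_sum fun S _ => Finset.sum_le_sum fun T _ => ?_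
    refine mul_le_mul_of_nonneg_left ?_ (hu0 S)
    refine add_le_add_right (Finset.sum_le_sum fun i _ => ?_) (f T)
    exact mul_le_mul_of_nonneg_right (le_max_left _ _) (hx0 i)
  -- Step 5 : swap S and T
  have h5 : ∑ S : Finset (Fin n), ∑ T ∈ S.powerset,
          ((∏ i ∈ S, x i / 2) * ∏ i ∈ Sᶜ, (1 - x i)) *
            (f T + ∑ i ∈ Sᶜ, max (f (insert i T) - f T) 0 * x i)
      = ∑ T : Finset (Fin n), ∑ S ∈ univ.filter (fun S => T ⊆ S),
          ((∏ i ∈ S, x i / 2) * ∏ i ∈ Sᶜ, (1 - x i)) *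
            (f T + ∑ i ∈ Sᶜ, max (f (insert i T) - f T) 0 * x i) := by
    refine Finset.sum_comm' fun S T => ?_
    simp [Finset.mem_powerset]
  -- Step 6 : per-T bound
  have h6 : ∀ T : Finset (Fin n),
      ∑ S ∈ univ.filter (fun S => T ⊆ S),
          ((∏ i ∈ S, x i / 2) * ∏ i ∈ Sᶜ, (1 - x i)) *
            (f T + ∑ i ∈ Sᶜ, max (f (insert i T) - f T) 0 * x i)
      ≤ ((∏ i ∈ T, x i / 2) * ∏ i ∈ Tᶜ, (1 - x i / 2)) * f T
        + ∑ i ∈ Tᶜ, ((∏ j ∈ T, x j / 2) * ∏ j ∈ Tᶜ, (1 - x j / 2)) *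
            (max (f (insert i T) - f T) 0 * x i) := by
    intro T
    have e1 : ∑ S ∈ univ.filter (fun S => T ⊆ S),
          ((∏ i ∈ S, x i / 2) * ∏ i ∈ Sᶜ, (1 - x i)) *
            (f T + ∑ i ∈ Sᶜ, max (f (insert i T) - f T) 0 * x i)
        = (∑ S ∈ univ.filter (fun S => T ⊆ S),
            ((∏ i ∈ S, x i / 2) * ∏ i ∈ Sᶜ, (1 - x i)) * f T)
          + ∑ S ∈ univ.filter (fun S => T ⊆ S),
              ∑ i ∈ Sᶜ, ((∏ j ∈ S, x j / 2) * ∏ j ∈ Sᶜ, (1 - x j)) *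
                (max (f (insert i T) - f T) 0 * x i) := by
      rw [← Finset.sum_add_distrib]
      refine Finset.sum_congr rfl fun S _ => ?_
      rw [mul_add, Finset.mul_sum]
    have e2 : (∑ S ∈ univ.filter (fun S => T ⊆ S),
            ((∏ i ∈ S, x i / 2) * ∏ i ∈ Sᶜ, (1 - x i)) * f T)
        = ((∏ i ∈ T, x i / 2) * ∏ i ∈ Tᶜ, (1 - x i / 2)) * f T := by
      rw [← Finset.sum_mul, sum_u_all]
    have e3 : ∑ S ∈ univ.filter (fun S => T ⊆ S),
              ∑ i ∈ Sᶜ, ((∏ j ∈ S, x j / 2) * ∏ j ∈ Sᶜ, (1 - x j)) *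
                (max (f (insert i T) - f T) 0 * x i)
        = ∑ i ∈ Tᶜ, ∑ S ∈ univ.filter (fun S => T ⊆ S ∧ i ∉ S),
              ((∏ j ∈ S, x j / 2) * ∏ j ∈ Sᶜ, (1 - x j)) *
                (max (f (insert i T) - f T) 0 * x i) := by
      refine Finset.sum_comm' fun S i => ?_
      simp only [Finset.mem_filter, Finset.mem_univ, true_and, Finset.mem_compl]
      constructor
      · rintro ⟨h1, h2⟩
        exact ⟨⟨h1, h2⟩, fun hiT => h2 (h1 hiT)⟩
      · rintro ⟨⟨h1, h2⟩, _⟩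
        exact ⟨h1, h2⟩
    have e4 : ∀ i ∈ Tᶜ,
        ∑ S ∈ univ.filter (fun S => T ⊆ S ∧ i ∉ S),
              ((∏ j ∈ S, x j / 2) * ∏ j ∈ Sᶜ, (1 - x j)) *
                (max (f (insert i T) - f T) 0 * x i)
        ≤ ((∏ j ∈ T, x j / 2) * ∏ j ∈ Tᶜ, (1 - x j / 2)) *
            (max (f (insert i T) - f T) 0 * x i) := by
      intro i hi
      rw [← Finset.sum_mul, sum_u_avoid x T i hi]
      refine mul_le_mul_of_nonneg_right ?_ (mul_nonneg (hM0 i T) (hx0 i))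
      have hsplit : (∏ j ∈ Tᶜ, (1 - x j / 2))
          = (1 - x i / 2) * ∏ j ∈ Tᶜ.erase i, (1 - x j / 2) :=
        (Finset.mul_prod_erase Tᶜ _ hi).symm
      have ha : 0 ≤ (∏ j ∈ T, x j / 2) * ∏ j ∈ Tᶜ.erase i, (1 - x j / 2) := by
        apply mul_nonneg
        · exact Finset.prod_nonneg fun j _ => by have := hx0 j; linarith
        · exact Finset.prod_nonneg fun j _ => by have := hx1 j; linarith
      rw [hsplit]
      have hrr : (∏ j ∈ T, x j / 2) * ((1 - x i / 2) * ∏ j ∈ Tᶜ.erase i, (1 - x j / 2))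
          = ((∏ j ∈ T, x j / 2) * ∏ j ∈ Tᶜ.erase i, (1 - x j / 2)) * (1 - x i / 2) := by ring
      rw [hrr]
      refine mul_le_mul_of_nonneg_left ?_ ha
      have := hx0 i; linarith
    calc ∑ S ∈ univ.filter (fun S => T ⊆ S),
          ((∏ i ∈ S, x i / 2) * ∏ i ∈ Sᶜ, (1 - x i)) *
            (f T + ∑ i ∈ Sᶜ, max (f (insert i T) - f T) 0 * x i)
        = _ := e1
      _ ≤ ((∏ i ∈ T, x i / 2) * ∏ i ∈ Tᶜ, (1 - x i / 2)) * f T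
          + ∑ i ∈ Tᶜ, ((∏ j ∈ T, x j / 2) * ∏ j ∈ Tᶜ, (1 - x j / 2)) *
              (max (f (insert i T) - f T) 0 * x i) := by
          rw [e2, e3]
          exact add_le_add_right (Finset.sum_le_sum e4) _
  -- Step 7+8 : sum up and handle the marginal part
  have h7 : ∑ T : Finset (Fin n), ∑ i ∈ Tᶜ,
        ((∏ j ∈ T, x j / 2) * ∏ j ∈ Tᶜ, (1 - x j / 2)) *
          (max (f (insert i T) - f T) 0 * x i)
      = 2 * ∑ T : Finset (Fin n), ∑ i ∈ Tᶜ,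
          ((∏ j ∈ T, x j / 2) * ∏ j ∈ Tᶜ, (1 - x j / 2)) * (x i / 2) *
            max (f (insert i T) - f T) 0 := by
    rw [Finset.mul_sum]
    refine Finset.sum_congr rfl fun T _ => ?_
    rw [Finset.mul_sum]
    exact Finset.sum_congr rfl fun i _ => by ring
  have h8 : ∑ T : Finset (Fin n), ∑ i ∈ Tᶜ,
          ((∏ j ∈ T, x j / 2) * ∏ j ∈ Tᶜ, (1 - x j / 2)) * (x i / 2) *
            max (f (insert i T) - f T) 0
      = ∑ T : Finset (Fin n), ∑ i ∈ T,
          ((∏ j ∈ T.erase i, x j / 2) * ∏ j ∈ (T.erase i)ᶜ, (1 - x j / 2)) * (x i / 2) *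
            max (f (insert i (T.erase i)) - f (T.erase i)) 0 :=
    reindex (fun T i => ((∏ j ∈ T, x j / 2) * ∏ j ∈ Tᶜ, (1 - x j / 2)) * (x i / 2) *
            max (f (insert i T) - f T) 0)
  have h9 : ∀ T : Finset (Fin n), ∑ i ∈ T,
          ((∏ j ∈ T.erase i, x j / 2) * ∏ j ∈ (T.erase i)ᶜ, (1 - x j / 2)) * (x i / 2) *
            max (f (insert i (T.erase i)) - f (T.erase i)) 0
      ≤ ((∏ j ∈ T, x j / 2) * ∏ j ∈ Tᶜ, (1 - x j / 2)) * f T := by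
    intro T
    calc ∑ i ∈ T,
          ((∏ j ∈ T.erase i, x j / 2) * ∏ j ∈ (T.erase i)ᶜ, (1 - x j / 2)) * (x i / 2) *
            max (f (insert i (T.erase i)) - f (T.erase i)) 0
        ≤ ∑ i ∈ T, ((∏ j ∈ T, x j / 2) * ∏ j ∈ Tᶜ, (1 - x j / 2)) *
            max (f T - f (T.erase i)) 0 := by
          refine Finset.sum_le_sum fun i hi => ?_
          rw [wshift x T i hi, Finset.insert_erase hi]
          refine mul_le_mul_of_nonneg_right ?_ (le_max_right _ _)
          have := hx0 i
          have := hwY0 T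
          nlinarith
      _ = ((∏ j ∈ T, x j / 2) * ∏ j ∈ Tᶜ, (1 - x j / 2)) *
            ∑ i ∈ T, max (f T - f (T.erase i)) 0 := by rw [Finset.mul_sum]
      _ ≤ ((∏ j ∈ T, x j / 2) * ∏ j ∈ Tᶜ, (1 - x j / 2)) * f T :=
          mul_le_mul_of_nonneg_left (pos_marginal f hf hnn T) (hwY0 T)
  calc ∑ S : Finset (Fin n), ((∏ i ∈ S, x i) * ∏ i ∈ Sᶜ, (1 - x i)) *
      (∑ T ∈ S.powerset, (1 / 2 ^ S.card : ℝ) *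
        (f T + ∑ i ∈ Sᶜ, (f (insert i T) - f T) * x i))
      = _ := h3
    _ ≤ _ := h4
    _ = _ := h5
    _ ≤ ∑ T : Finset (Fin n), (((∏ i ∈ T, x i / 2) * ∏ i ∈ Tᶜ, (1 - x i / 2)) * f T
        + ∑ i ∈ Tᶜ, ((∏ j ∈ T, x j / 2) * ∏ j ∈ Tᶜ, (1 - x j / 2)) *
            (max (f (insert i T) - f T) 0 * x i)) := Finset.sum_le_sum fun T _ => h6 T
    _ = (∑ T : Finset (Fin n), ((∏ i ∈ T, x i / 2) * ∏ i ∈ Tᶜ, (1 - x i / 2)) * f T)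
        + ∑ T : Finset (Fin n), ∑ i ∈ Tᶜ,
            ((∏ j ∈ T, x j / 2) * ∏ j ∈ Tᶜ, (1 - x j / 2)) *
              (max (f (insert i T) - f T) 0 * x i) := Finset.sum_add_distrib
    _ ≤ (∑ T : Finset (Fin n), ((∏ i ∈ T, x i / 2) * ∏ i ∈ Tᶜ, (1 - x i / 2)) * f T)
        + 2 * ∑ T : Finset (Fin n), ((∏ j ∈ T, x j / 2) * ∏ j ∈ Tᶜ, (1 - x j / 2)) * f T := by
        rw [h7, h8]
        refine add_le_add_right ?_ _
        have := Finset.sum_le_sum fun T (_ : T ∈ (univ : Finset (Finset (Fin n)))) => h9 T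
        linarith
    _ = 3 * multilinear f (fun i => x i / 2) := by rw [hmult]; ring

private lemma sum_one {n : ℕ} (x : Fin n → ℝ) :
    ∑ S : Finset (Fin n), ((∏ i ∈ S, x i) * ∏ i ∈ Sᶜ, (1 - x i)) = 1 := by
  classical
  have h := Finset.prod_add x (fun i => 1 - x i) (univ : Finset (Fin n))
  simp only [Finset.powerset_univ] at h
  calc ∑ S : Finset (Fin n), ((∏ i ∈ S, x i) * ∏ i ∈ Sᶜ, (1 - x i))
      = ∑ S : Finset (Fin n), ((∏ i ∈ S, x i) * ∏ i ∈ univ \ S, (1 - x i)) := by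
        refine Finset.sum_congr rfl fun S _ => ?_
        rw [← Finset.compl_eq_univ_sdiff]
    _ = ∏ i : Fin n, (x i + (1 - x i)) := h.symm
    _ = 1 := by simp

theorem stmt_12 {n : ℕ} (f : Finset (Fin n) → ℝ) (hf : Submodular f)
    (hnonneg : ∀ S, 0 ≤ f S) (x : Fin n → ℝ) (hx : ∀ i, 0 ≤ x i ∧ x i ≤ 1) :
    fstarHalf f x ≤ 50 * multilinear f (fun i => x i / 2) := by
  classical
  have hx0 : ∀ i, 0 ≤ x i := fun i => (hx i).1
  have hx1 : ∀ i, x i ≤ 1 := fun i => (hx i).2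
  have hwX0 : ∀ S : Finset (Fin n), 0 ≤ (∏ i ∈ S, x i) * ∏ i ∈ Sᶜ, (1 - x i) := by
    intro S
    apply mul_nonneg
    · exact Finset.prod_nonneg fun i _ => hx0 i
    · exact Finset.prod_nonneg fun i _ => by have := hx1 i; linarith
  have hF0 : 0 ≤ multilinear f (fun i => x i / 2) := by
    apply Finset.sum_nonneg
    intro S _
    refine mul_nonneg (mul_nonneg ?_ ?_) (hnonneg S)
    · exact Finset.prod_nonneg fun i _ => by have := hx0 i; positivity
    · exact Finset.prod_nonneg fun i _ => by have := hx1 i; simp only []; linarith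
  have hstep1 : fstarHalf f x ≤ ∑ S : Finset (Fin n),
      ((∏ i ∈ S, x i) * ∏ i ∈ Sᶜ, (1 - x i)) *
        (∑ T ∈ S.powerset, (1 / 2 ^ S.card : ℝ) *
          (f T + ∑ i ∈ Sᶜ, (f (insert i T) - f T) * x i)) := by
    have heq : fstarHalf f x = ∑ S : Finset (Fin n),
        ((∏ i ∈ S, x i) * ∏ i ∈ Sᶜ, (1 - x i)) * fstarHalf f x := by
      rw [← Finset.sum_mul, sum_one, one_mul]
    rw [heq]
    refine Finset.sum_le_sum fun S _ => ?_
    refine mul_le_mul_of_nonneg_left ?_ (hwX0 S)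
    exact Finset.inf'_le _ (Finset.mem_univ S)
  have h50 : 3 * multilinear f (fun i => x i / 2) ≤ 50 * multilinear f (fun i => x i / 2) := by
    nlinarith
  exact le_trans hstep1 (le_trans (main2 f hf hnonneg x hx) h50)
end

section
/- For any non-negative submodular function f on subsets of [n], any x ∈ [0,1]^n, and any distribution α over subsets with ∑_S α_S = 1 and ∑_S α_S 1_S = x, we have ∑_S α_S f(S) ≤ 200·F_max(x), where F_max is the multilinear extension of f_max(S) = max_{T ⊆ S} f(T). That is, the correlation gap of any non-negative submodular function is at most 200. -/
open Finset

lemma sub_union {n : ℕ} (f : Finset (Fin n) → ℝ) (hf : Submodular f) :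
    ∀ (A R : Finset (Fin n)), Disjoint A R →
      f (R ∪ A) ≤ f R + ∑ i ∈ A, (f (insert i R) - f R) := by
  classical
  intro A
  induction A using Finset.induction_on with
  | empty => intro R _; simp
  | @insert a A ha IH =>
    intro R hD
    have haR : a ∉ R := by
      have := Finset.disjoint_left.1 hD (Finset.mem_insert_self a A)
      exact this
    have hAR : Disjoint A R := by
      exact Finset.disjoint_of_subset_left (Finset.subset_insert a A) hD
    have hsub : f ((R ∪ A) ∪ insert a R) + f ((R ∪ A) ∩ insert a R) ≤ f (R ∪ A) + f (insert a R) :=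
      hf (R ∪ A) (insert a R)
    have h1 : (R ∪ A) ∪ insert a R = R ∪ insert a A := by
      ext z; simp [Finset.mem_union, Finset.mem_insert]; tauto
    have h2 : (R ∪ A) ∩ insert a R = R := by
      ext z
      simp only [Finset.mem_inter, Finset.mem_union, Finset.mem_insert]
      constructor
      · rintro ⟨hz1, hz2⟩
        rcases hz2 with rfl | hz2
        · rcases hz1 with h | h
          · exact h
          · exact absurd h ha
        · exact hz2
      · intro hz; exact ⟨Or.inl hz, Or.inr hz⟩
    rw [h1, h2] at hsub
    have hIH := IH R hAR
    have hsum : ∑ i ∈ insert a A, (f (insert i R) - f R)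
        = (f (insert a R) - f R) + ∑ i ∈ A, (f (insert i R) - f R) :=
      Finset.sum_insert ha
    rw [hsum]
    linarith

lemma sub_erase {n : ℕ} (f : Finset (Fin n) → ℝ) (hf : Submodular f) :
    ∀ (Q R : Finset (Fin n)), Q ⊆ R →
      ∑ i ∈ Q, (f R - f (R.erase i)) ≤ f R - f (R \ Q) := by
  classical
  intro Q
  induction Q using Finset.induction_on with
  | empty => intro R _; simp
  | @insert a Q ha IH =>
    intro R hQR
    have haR : a ∈ R := hQR (Finset.mem_insert_self a Q)
    have hQR' : Q ⊆ R := fun z hz => hQR (Finset.mem_insert_of_mem hz)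
    have hsub : f ((R.erase a) ∪ (R \ Q)) + f ((R.erase a) ∩ (R \ Q)) ≤ f (R.erase a) + f (R \ Q) :=
      hf (R.erase a) (R \ Q)
    have h1 : (R.erase a) ∪ (R \ Q) = R := by
      ext z
      simp only [Finset.mem_union, Finset.mem_erase, Finset.mem_sdiff]
      constructor
      · rintro (⟨_, h⟩ | ⟨h, _⟩) <;> exact h
      · intro hz
        by_cases hza : z = a
        · subst hza; exact Or.inr ⟨hz, ha⟩
        · exact Or.inl ⟨hza, hz⟩
    have h2 : (R.erase a) ∩ (R \ Q) = R \ insert a Q := by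
      ext z
      simp only [Finset.mem_inter, Finset.mem_erase, Finset.mem_sdiff, Finset.mem_insert]
      tauto
    rw [h1, h2] at hsub
    have hIH := IH R hQR'
    rw [Finset.sum_insert ha]
    linarith

lemma sub_erase_pos {n : ℕ} (f : Finset (Fin n) → ℝ) (hf : Submodular f)
    (h0 : ∀ S, 0 ≤ f S) (B : Finset (Fin n)) :
    ∑ i ∈ B, max (f B - f (B.erase i)) 0 ≤ f B := by
  classical
  set P := B.filter (fun i => 0 < f B - f (B.erase i)) with hP
  have hsum : ∑ i ∈ B, max (f B - f (B.erase i)) 0 = ∑ i ∈ P, (f B - f (B.erase i)) := by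
    rw [hP, Finset.sum_filter]
    apply Finset.sum_congr rfl
    intro i _
    by_cases h : 0 < f B - f (B.erase i)
    · simp [h, max_eq_left (le_of_lt h)]
    · push_neg at h
      rw [max_eq_right h, if_neg (by intro h'; simp at h'; linarith)]
  rw [hsum]
  have := sub_erase f hf P B (Finset.filter_subset _ _)
  have := h0 (B \ P)
  linarith

lemma sub_union_pos {n : ℕ} (f : Finset (Fin n) → ℝ) (hf : Submodular f)
    (h0 : ∀ S, 0 ≤ f S) (V W : Finset (Fin n)) (hD : Disjoint W V) :
    ∑ c ∈ W, max (f V - f (insert c V)) 0 ≤ f V := by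
  classical
  set P := W.filter (fun c => 0 < f V - f (insert c V)) with hP
  have hsum : ∑ c ∈ W, max (f V - f (insert c V)) 0 = ∑ c ∈ P, (f V - f (insert c V)) := by
    rw [hP, Finset.sum_filter]
    apply Finset.sum_congr rfl
    intro c _
    by_cases h : 0 < f V - f (insert c V)
    · simp [h, max_eq_left (le_of_lt h)]
    · push_neg at h
      rw [max_eq_right h, if_neg (by intro h'; simp at h'; linarith)]
  rw [hsum]
  have hPD : Disjoint P V := Finset.disjoint_of_subset_left (Finset.filter_subset _ _) hD
  have hu := sub_union f hf P V hPD
  have h0' := h0 (V ∪ P)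
  have : ∑ c ∈ P, (f V - f (insert c V)) = - ∑ c ∈ P, (f (insert c V) - f V) := by
    rw [← Finset.sum_neg_distrib]; apply Finset.sum_congr rfl; intros; ring
  linarith
open Finset

noncomputable def ww {n : ℕ} (x : Fin n → ℝ) (R : Finset (Fin n)) : ℝ :=
  (∏ i ∈ R, x i) * ∏ i ∈ Rᶜ, (1 - x i)

lemma ww_nonneg {n : ℕ} (x : Fin n → ℝ) (hx : ∀ i, 0 ≤ x i ∧ x i ≤ 1) (R : Finset (Fin n)) :
    0 ≤ ww x R := by
  apply mul_nonneg
  · exact Finset.prod_nonneg fun i _ => (hx i).1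
  · exact Finset.prod_nonneg fun i _ => by linarith [(hx i).2]

lemma ww_sum {n : ℕ} (x : Fin n → ℝ) :
    ∑ R : Finset (Fin n), ww x R = 1 := by
  classical
  have h := Finset.prod_add x (fun i => 1 - x i) (Finset.univ : Finset (Fin n))
  have hL : ∏ i ∈ (Finset.univ : Finset (Fin n)), (x i + (1 - x i)) = 1 := by
    rw [Finset.prod_congr rfl (fun i _ => by ring : ∀ i ∈ (Finset.univ : Finset (Fin n)), x i + (1 - x i) = 1)]
    exact Finset.prod_const_one
  rw [hL, Finset.powerset_univ] at h
  rw [h]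
  apply Finset.sum_congr rfl
  intro R _
  rw [ww, Finset.compl_eq_univ_sdiff R]

lemma ww_flip {n : ℕ} (x : Fin n → ℝ) (i : Fin n) (R : Finset (Fin n)) (hi : i ∉ R) :
    x i * ww x R = (1 - x i) * ww x (insert i R) := by
  classical
  have hic : i ∈ Rᶜ := Finset.mem_compl.2 hi
  have h1 : ∏ j ∈ insert i R, x j = x i * ∏ j ∈ R, x j := Finset.prod_insert hi
  have h2 : (insert i R)ᶜ = Rᶜ.erase i := Finset.compl_insert
  have h3 : (1 - x i) * ∏ j ∈ Rᶜ.erase i, (1 - x j) = ∏ j ∈ Rᶜ, (1 - x j) :=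
    Finset.mul_prod_erase Rᶜ (fun j => 1 - x j) hic
  rw [ww, ww, h1, h2, ← h3]
  ring

lemma swap_insert {n : ℕ} (i : Fin n) (u : Finset (Fin n) → ℝ) :
    ∑ R ∈ Finset.univ.filter (fun R : Finset (Fin n) => i ∉ R), u (insert i R)
      = ∑ R ∈ Finset.univ.filter (fun R : Finset (Fin n) => i ∈ R), u R := by
  classical
  apply Finset.sum_nbij' (fun R => insert i R) (fun R => R.erase i)
  · intro R hR
    simp only [Finset.mem_filter, Finset.mem_univ, true_and] at hR ⊢
    exact Finset.mem_insert_self i R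
  · intro R hR
    simp only [Finset.mem_filter, Finset.mem_univ, true_and] at hR ⊢
    exact Finset.notMem_erase i R
  · intro R hR
    simp only [Finset.mem_filter, Finset.mem_univ, true_and] at hR
    exact Finset.erase_insert hR
  · intro R hR
    simp only [Finset.mem_filter, Finset.mem_univ, true_and] at hR
    exact Finset.insert_erase hR
  · intro R hR
    rfl

lemma double_swap_mem {n : ℕ} (E : Finset (Fin n)) (u : Fin n → Finset (Fin n) → ℝ) :
    ∑ i ∈ E, ∑ R ∈ Finset.univ.filter (fun R : Finset (Fin n) => i ∈ R), u i R
      = ∑ R : Finset (Fin n), ∑ i ∈ E ∩ R, u i R := by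
  classical
  have h1 : ∀ i ∈ E, ∑ R ∈ Finset.univ.filter (fun R : Finset (Fin n) => i ∈ R), u i R
      = ∑ R : Finset (Fin n), if i ∈ R then u i R else 0 :=
    fun i _ => Finset.sum_filter _ _
  rw [Finset.sum_congr rfl h1, Finset.sum_comm]
  apply Finset.sum_congr rfl
  intro R _
  exact Finset.sum_ite_mem E R (fun i => u i R)

lemma double_swap_not {n : ℕ} (E : Finset (Fin n)) (u : Fin n → Finset (Fin n) → ℝ) :
    ∑ i ∈ E, ∑ R ∈ Finset.univ.filter (fun R : Finset (Fin n) => i ∉ R), u i R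
      = ∑ R : Finset (Fin n), ∑ i ∈ E \ R, u i R := by
  classical
  have h1 : ∀ i ∈ E, ∑ R ∈ Finset.univ.filter (fun R : Finset (Fin n) => i ∉ R), u i R
      = ∑ R : Finset (Fin n), if i ∈ Rᶜ then u i R else 0 := by
    intro i _
    rw [Finset.sum_filter]
    apply Finset.sum_congr rfl
    intro R _
    simp [Finset.mem_compl]
  rw [Finset.sum_congr rfl h1, Finset.sum_comm]
  apply Finset.sum_congr rfl
  intro R _
  rw [Finset.sum_ite_mem E Rᶜ (fun i => u i R)]
  apply Finset.sum_congr _ (fun _ _ => rfl)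
  ext z; simp [Finset.mem_sdiff, Finset.mem_compl]

lemma double_swap2 {n : ℕ} (a : Finset (Fin n) → ℝ) (b : Fin n → ℝ) :
    ∑ S : Finset (Fin n), a S * ∑ i ∈ S, b i
      = ∑ i : Fin n, (∑ S ∈ Finset.univ.filter (fun S : Finset (Fin n) => i ∈ S), a S) * b i := by
  classical
  have h1 : ∀ S : Finset (Fin n), a S * ∑ i ∈ S, b i = ∑ i ∈ S, a S * b i :=
    fun S => Finset.mul_sum S b (a S)
  have h2 : ∀ S : Finset (Fin n), ∑ i ∈ S, a S * b i
      = ∑ i : Fin n, if i ∈ S then a S * b i else 0 := by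
    intro S
    rw [Finset.sum_ite_mem Finset.univ S (fun i => a S * b i), Finset.univ_inter]
  calc ∑ S : Finset (Fin n), a S * ∑ i ∈ S, b i
      = ∑ S : Finset (Fin n), ∑ i : Fin n, if i ∈ S then a S * b i else 0 := by
        apply Finset.sum_congr rfl; intro S _; rw [h1 S]; exact h2 S
    _ = ∑ i : Fin n, ∑ S : Finset (Fin n), if i ∈ S then a S * b i else 0 := Finset.sum_comm
    _ = ∑ i : Fin n, (∑ S ∈ Finset.univ.filter (fun S : Finset (Fin n) => i ∈ S), a S) * b i := by
        apply Finset.sum_congr rfl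
        intro i _
        rw [Finset.sum_mul, Finset.sum_filter]
lemma tmul_max (t w c : ℝ) (h0w : 0 ≤ w) (h0t : 0 ≤ t) (ht1 : t ≤ 1) :
    t * (w * c) ≤ w * max c 0 := by
  rcases le_total c 0 with hc | hc
  · rw [max_eq_right hc]
    have h1 : w * c ≤ 0 := mul_nonpos_of_nonneg_of_nonpos h0w hc
    nlinarith
  · rw [max_eq_left hc]
    have h2 : t * (w * c) ≤ 1 * (w * c) :=
      mul_le_mul_of_nonneg_right ht1 (mul_nonneg h0w hc)
    linarith

lemma Ppos {n : ℕ} (f : Finset (Fin n) → ℝ) (hf : Submodular f) (h0 : ∀ S, 0 ≤ f S)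
    (x : Fin n → ℝ) (hx : ∀ i, 0 ≤ x i ∧ x i ≤ 1) :
    ∑ i : Fin n, ∑ R ∈ Finset.univ.filter (fun R : Finset (Fin n) => i ∈ R),
        ww x R * max (f R - f (R.erase i)) 0
      ≤ ∑ R : Finset (Fin n), ww x R * f R := by
  classical
  rw [double_swap_mem Finset.univ (fun i R => ww x R * max (f R - f (R.erase i)) 0)]
  apply Finset.sum_le_sum
  intro R _
  rw [Finset.univ_inter, ← Finset.mul_sum]
  exact mul_le_mul_of_nonneg_left (sub_erase_pos f hf h0 R) (ww_nonneg x hx R)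

lemma K1 {n : ℕ} (f : Finset (Fin n) → ℝ) (hf : Submodular f) (h0 : ∀ S, 0 ≤ f S)
    (x : Fin n → ℝ) (hx : ∀ i, 0 ≤ x i ∧ x i ≤ 1) (E : Finset (Fin n)) :
    ∑ i ∈ E, x i * (∑ R : Finset (Fin n), ww x R * (f (insert i R) - f R))
      ≤ ∑ R : Finset (Fin n), ww x R * f R := by
  classical
  set P : Fin n → ℝ := fun i => ∑ R ∈ Finset.univ.filter (fun R : Finset (Fin n) => i ∈ R),
      ww x R * max (f R - f (R.erase i)) 0 with hPdef
  have hPn : ∀ i, 0 ≤ P i := by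
    intro i
    apply Finset.sum_nonneg
    intro R _
    exact mul_nonneg (ww_nonneg x hx R) (le_max_right _ _)
  have hstep : ∀ i : Fin n, x i * (∑ R : Finset (Fin n), ww x R * (f (insert i R) - f R)) ≤ P i := by
    intro i
    rw [Finset.mul_sum]
    have hsplit :
        ∑ R : Finset (Fin n), x i * (ww x R * (f (insert i R) - f R))
          = ∑ R ∈ Finset.univ.filter (fun R : Finset (Fin n) => i ∉ R),
              x i * (ww x R * (f (insert i R) - f R))
            + ∑ R ∈ Finset.univ.filter (fun R : Finset (Fin n) => ¬ i ∉ R),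
              x i * (ww x R * (f (insert i R) - f R)) :=
      (Finset.sum_filter_add_sum_filter_not Finset.univ _ _).symm
    have hzero : ∑ R ∈ Finset.univ.filter (fun R : Finset (Fin n) => ¬ i ∉ R),
        x i * (ww x R * (f (insert i R) - f R)) = 0 := by
      apply Finset.sum_eq_zero
      intro R hR
      simp only [Finset.mem_filter, not_not] at hR
      rw [Finset.insert_eq_self.2 hR.2]
      ring
    rw [hsplit, hzero, add_zero]
    have hb : ∑ R ∈ Finset.univ.filter (fun R : Finset (Fin n) => i ∉ R),
          x i * (ww x R * (f (insert i R) - f R))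
        ≤ ∑ R ∈ Finset.univ.filter (fun R : Finset (Fin n) => i ∉ R),
          ww x (insert i R) * max (f (insert i R) - f R) 0 := by
      apply Finset.sum_le_sum
      intro R hR
      simp only [Finset.mem_filter, Finset.mem_univ, true_and] at hR
      have e := ww_flip x i R hR
      have : x i * (ww x R * (f (insert i R) - f R))
          = (1 - x i) * (ww x (insert i R) * (f (insert i R) - f R)) := by
        rw [← mul_assoc, ← mul_assoc, e]
      rw [this]
      exact tmul_max (1 - x i) (ww x (insert i R)) (f (insert i R) - f R)
        (ww_nonneg x hx _) (by linarith [(hx i).2]) (by linarith [(hx i).1])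
    have hswap : ∑ R ∈ Finset.univ.filter (fun R : Finset (Fin n) => i ∉ R),
          ww x (insert i R) * max (f (insert i R) - f R) 0 = P i := by
      show _ = ∑ R ∈ Finset.univ.filter (fun R : Finset (Fin n) => i ∈ R),
          ww x R * max (f R - f (R.erase i)) 0
      rw [← swap_insert i (fun R' => ww x R' * max (f R' - f (R'.erase i)) 0)]
      apply Finset.sum_congr rfl
      intro R hR
      simp only [Finset.mem_filter, Finset.mem_univ, true_and] at hR
      rw [Finset.erase_insert hR]
    calc ∑ R ∈ Finset.univ.filter (fun R : Finset (Fin n) => i ∉ R),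
          x i * (ww x R * (f (insert i R) - f R)) ≤ _ := hb
      _ = P i := hswap
  calc ∑ i ∈ E, x i * (∑ R : Finset (Fin n), ww x R * (f (insert i R) - f R))
      ≤ ∑ i ∈ E, P i := Finset.sum_le_sum (fun i _ => hstep i)
    _ ≤ ∑ i : Fin n, P i := Finset.sum_le_sum_of_subset_of_nonneg (Finset.subset_univ E)
        (fun i _ _ => hPn i)
    _ ≤ ∑ R : Finset (Fin n), ww x R * f R := Ppos f hf h0 x hx
lemma K2 {n : ℕ} (f : Finset (Fin n) → ℝ) (hf : Submodular f) (h0 : ∀ S, 0 ≤ f S)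
    (x : Fin n → ℝ) (hx : ∀ i, 0 ≤ x i ∧ x i ≤ 1) (A : Finset (Fin n))
    (hA : ∀ i ∈ A, 1/2 < x i) :
    f A ≤ 2 * ∑ R : Finset (Fin n), ww x R * f (A ∩ R) := by
  classical
  -- pointwise expansion
  have hc1 : ∀ R : Finset (Fin n),
      f A ≤ f (A ∩ R) + ∑ i ∈ A, (f (insert i (A ∩ R)) - f (A ∩ R)) := by
    intro R
    have hD : Disjoint (A \ (A ∩ R)) (A ∩ R) := Finset.sdiff_disjoint
    have hu := sub_union f hf (A \ (A ∩ R)) (A ∩ R) hD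
    have he : (A ∩ R) ∪ (A \ (A ∩ R)) = A :=
      Finset.union_sdiff_of_subset Finset.inter_subset_left
    rw [he] at hu
    have hext : ∑ i ∈ A \ (A ∩ R), (f (insert i (A ∩ R)) - f (A ∩ R))
        = ∑ i ∈ A, (f (insert i (A ∩ R)) - f (A ∩ R)) := by
      apply Finset.sum_subset Finset.sdiff_subset
      intro i hiA hiN
      have hiAR : i ∈ A ∩ R := by
        by_contra hc
        exact hiN (Finset.mem_sdiff.2 ⟨hiA, hc⟩)
      rw [Finset.insert_eq_self.2 hiAR]
      ring
    rw [hext] at hu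
    exact hu
  set T1 : ℝ := ∑ R : Finset (Fin n), ww x R * f (A ∩ R) with hT1
  -- average the pointwise bound
  have havg : f A ≤ T1 + ∑ i ∈ A, ∑ R : Finset (Fin n),
      ww x R * (f (insert i (A ∩ R)) - f (A ∩ R)) := by
    have h1 : f A = ∑ R : Finset (Fin n), ww x R * f A := by
      rw [← Finset.sum_mul, ww_sum x, one_mul]
    have h2 : ∑ R : Finset (Fin n), ww x R * f A
        ≤ ∑ R : Finset (Fin n), ww x R * (f (A ∩ R) + ∑ i ∈ A, (f (insert i (A ∩ R)) - f (A ∩ R))) := by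
      apply Finset.sum_le_sum
      intro R _
      exact mul_le_mul_of_nonneg_left (hc1 R) (ww_nonneg x hx R)
    have h3 : ∑ R : Finset (Fin n), ww x R * (f (A ∩ R) + ∑ i ∈ A, (f (insert i (A ∩ R)) - f (A ∩ R)))
        = T1 + ∑ R : Finset (Fin n), ∑ i ∈ A, ww x R * (f (insert i (A ∩ R)) - f (A ∩ R)) := by
      rw [hT1, ← Finset.sum_add_distrib]
      apply Finset.sum_congr rfl
      intro R _
      rw [mul_add, Finset.mul_sum]
    have h4 : ∑ R : Finset (Fin n), ∑ i ∈ A, ww x R * (f (insert i (A ∩ R)) - f (A ∩ R))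
        = ∑ i ∈ A, ∑ R : Finset (Fin n), ww x R * (f (insert i (A ∩ R)) - f (A ∩ R)) :=
      Finset.sum_comm
    rw [h1]
    calc ∑ R : Finset (Fin n), ww x R * f A ≤ _ := h2
      _ = _ := h3
      _ = T1 + ∑ i ∈ A, ∑ R : Finset (Fin n), ww x R * (f (insert i (A ∩ R)) - f (A ∩ R)) := by
        rw [h4]
  -- bound the second term
  have hterm : ∀ i ∈ A, ∑ R : Finset (Fin n), ww x R * (f (insert i (A ∩ R)) - f (A ∩ R))
      ≤ ∑ R ∈ Finset.univ.filter (fun R : Finset (Fin n) => i ∈ R),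
          ww x R * max (f (A ∩ R) - f ((A ∩ R).erase i)) 0 := by
    intro i hiA
    have hsplit : ∑ R : Finset (Fin n), ww x R * (f (insert i (A ∩ R)) - f (A ∩ R))
        = ∑ R ∈ Finset.univ.filter (fun R : Finset (Fin n) => i ∉ R),
            ww x R * (f (insert i (A ∩ R)) - f (A ∩ R))
          + ∑ R ∈ Finset.univ.filter (fun R : Finset (Fin n) => ¬ i ∉ R),
            ww x R * (f (insert i (A ∩ R)) - f (A ∩ R)) :=
      (Finset.sum_filter_add_sum_filter_not Finset.univ _ _).symm
    have hzero : ∑ R ∈ Finset.univ.filter (fun R : Finset (Fin n) => ¬ i ∉ R),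
        ww x R * (f (insert i (A ∩ R)) - f (A ∩ R)) = 0 := by
      apply Finset.sum_eq_zero
      intro R hR
      simp only [Finset.mem_filter, not_not] at hR
      have : i ∈ A ∩ R := Finset.mem_inter.2 ⟨hiA, hR.2⟩
      rw [Finset.insert_eq_self.2 this]
      ring
    have hb : ∑ R ∈ Finset.univ.filter (fun R : Finset (Fin n) => i ∉ R),
          ww x R * (f (insert i (A ∩ R)) - f (A ∩ R))
        ≤ ∑ R ∈ Finset.univ.filter (fun R : Finset (Fin n) => i ∉ R),
          ww x (insert i R) * max (f (insert i (A ∩ R)) - f (A ∩ R)) 0 := by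
      apply Finset.sum_le_sum
      intro R hR
      simp only [Finset.mem_filter, Finset.mem_univ, true_and] at hR
      have hxi := hA i hiA
      have hwle : ww x R ≤ ww x (insert i R) := by
        have e := ww_flip x i R hR
        have h1 : x i * ww x R ≤ x i * ww x (insert i R) := by
          rw [e]
          exact mul_le_mul_of_nonneg_right (by linarith) (ww_nonneg x hx _)
        exact le_of_mul_le_mul_left h1 (by linarith)
      calc ww x R * (f (insert i (A ∩ R)) - f (A ∩ R))
          ≤ ww x R * max (f (insert i (A ∩ R)) - f (A ∩ R)) 0 :=
            mul_le_mul_of_nonneg_left (le_max_left _ _) (ww_nonneg x hx R)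
        _ ≤ ww x (insert i R) * max (f (insert i (A ∩ R)) - f (A ∩ R)) 0 :=
            mul_le_mul_of_nonneg_right hwle (le_max_right _ _)
    have hswap : ∑ R ∈ Finset.univ.filter (fun R : Finset (Fin n) => i ∉ R),
          ww x (insert i R) * max (f (insert i (A ∩ R)) - f (A ∩ R)) 0
        = ∑ R ∈ Finset.univ.filter (fun R : Finset (Fin n) => i ∈ R),
          ww x R * max (f (A ∩ R) - f ((A ∩ R).erase i)) 0 := by
      rw [← swap_insert i (fun R' => ww x R' * max (f (A ∩ R') - f ((A ∩ R').erase i)) 0)]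
      apply Finset.sum_congr rfl
      intro R hR
      simp only [Finset.mem_filter, Finset.mem_univ, true_and] at hR
      have e1 : A ∩ insert i R = insert i (A ∩ R) := by
        ext z
        simp only [Finset.mem_inter, Finset.mem_insert]
        constructor
        · rintro ⟨hzA, rfl | hzR⟩
          · exact Or.inl rfl
          · exact Or.inr ⟨hzA, hzR⟩
        · rintro (rfl | ⟨hzA, hzR⟩)
          · exact ⟨hiA, Or.inl rfl⟩
          · exact ⟨hzA, Or.inr hzR⟩
      have e2 : (insert i (A ∩ R)).erase i = A ∩ R := by
        apply Finset.erase_insert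
        intro hc
        exact hR (Finset.mem_inter.1 hc).2
      rw [e1, e2]
    rw [hsplit, hzero, add_zero, ← hswap]
    exact hb
  have hsum2 : ∑ i ∈ A, ∑ R ∈ Finset.univ.filter (fun R : Finset (Fin n) => i ∈ R),
        ww x R * max (f (A ∩ R) - f ((A ∩ R).erase i)) 0 ≤ T1 := by
    rw [double_swap_mem A (fun i R => ww x R * max (f (A ∩ R) - f ((A ∩ R).erase i)) 0), hT1]
    apply Finset.sum_le_sum
    intro R _
    rw [← Finset.mul_sum]
    exact mul_le_mul_of_nonneg_left (sub_erase_pos f hf h0 (A ∩ R)) (ww_nonneg x hx R)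
  have : ∑ i ∈ A, ∑ R : Finset (Fin n), ww x R * (f (insert i (A ∩ R)) - f (A ∩ R)) ≤ T1 :=
    le_trans (Finset.sum_le_sum hterm) hsum2
  linarith
lemma K3 {n : ℕ} (f : Finset (Fin n) → ℝ) (hf : Submodular f) (h0 : ∀ S, 0 ≤ f S)
    (x : Fin n → ℝ) (hx : ∀ i, 0 ≤ x i ∧ x i ≤ 1)
    (hd : ∀ (c : Fin n) (V : Finset (Fin n)), 1/2 < x c → f (insert c V) = f V)
    (A : Finset (Fin n)) :
    f A ≤ 2 * ((∑ R : Finset (Fin n), ww x R * f R)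
      + ∑ i ∈ A, ∑ R : Finset (Fin n), ww x R * (f (insert i R) - f R)) := by
  classical
  -- Step 1 : f A ≤ 2 * ∑_R ww R * f (A ∪ R)
  have hc1 : ∀ R : Finset (Fin n),
      f A ≤ f (A ∪ R) + ∑ c ∈ R \ A, (f ((A ∪ R).erase c) - f (A ∪ R)) := by
    intro R
    have hQ : R \ A ⊆ A ∪ R := fun z hz =>
      Finset.mem_union_right A (Finset.mem_sdiff.1 hz).1
    have he := sub_erase f hf (R \ A) (A ∪ R) hQ
    have hAe : (A ∪ R) \ (R \ A) = A := by
      ext z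
      simp only [Finset.mem_sdiff, Finset.mem_union]
      tauto
    rw [hAe] at he
    have hneg : ∑ c ∈ R \ A, (f ((A ∪ R).erase c) - f (A ∪ R))
        = - ∑ c ∈ R \ A, (f (A ∪ R) - f ((A ∪ R).erase c)) := by
      rw [← Finset.sum_neg_distrib]
      apply Finset.sum_congr rfl
      intros; ring
    rw [hneg]
    linarith
  have havg : f A ≤ (∑ R : Finset (Fin n), ww x R * f (A ∪ R))
      + ∑ R : Finset (Fin n), ∑ c ∈ (Finset.univ \ A) ∩ R,
          ww x R * (f ((A ∪ R).erase c) - f (A ∪ R)) := by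
    have h1 : f A = ∑ R : Finset (Fin n), ww x R * f A := by
      rw [← Finset.sum_mul, ww_sum x, one_mul]
    have h2 : ∑ R : Finset (Fin n), ww x R * f A
        ≤ ∑ R : Finset (Fin n), ww x R *
            (f (A ∪ R) + ∑ c ∈ R \ A, (f ((A ∪ R).erase c) - f (A ∪ R))) :=
      Finset.sum_le_sum fun R _ => mul_le_mul_of_nonneg_left (hc1 R) (ww_nonneg x hx R)
    have h3 : ∑ R : Finset (Fin n), ww x R *
          (f (A ∪ R) + ∑ c ∈ R \ A, (f ((A ∪ R).erase c) - f (A ∪ R)))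
        = (∑ R : Finset (Fin n), ww x R * f (A ∪ R))
          + ∑ R : Finset (Fin n), ∑ c ∈ (Finset.univ \ A) ∩ R,
              ww x R * (f ((A ∪ R).erase c) - f (A ∪ R)) := by
      rw [← Finset.sum_add_distrib]
      apply Finset.sum_congr rfl
      intro R _
      rw [mul_add, Finset.mul_sum]
      congr 1
      apply Finset.sum_congr _ (fun _ _ => rfl)
      ext z
      simp only [Finset.mem_sdiff, Finset.mem_inter, Finset.mem_univ, true_and]
      tauto
    rw [h1]
    calc ∑ R : Finset (Fin n), ww x R * f A ≤ _ := h2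
      _ = _ := h3
  -- swap the double sum
  have hswap0 : ∑ R : Finset (Fin n), ∑ c ∈ (Finset.univ \ A) ∩ R,
        ww x R * (f ((A ∪ R).erase c) - f (A ∪ R))
      = ∑ c ∈ Finset.univ \ A, ∑ R ∈ Finset.univ.filter (fun R : Finset (Fin n) => c ∈ R),
        ww x R * (f ((A ∪ R).erase c) - f (A ∪ R)) :=
    (double_swap_mem (Finset.univ \ A) (fun c R => ww x R * (f ((A ∪ R).erase c) - f (A ∪ R)))).symm
  -- per-c bound
  have hterm : ∀ c ∈ Finset.univ \ A,
      ∑ R ∈ Finset.univ.filter (fun R : Finset (Fin n) => c ∈ R),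
        ww x R * (f ((A ∪ R).erase c) - f (A ∪ R))
      ≤ ∑ R ∈ Finset.univ.filter (fun R : Finset (Fin n) => c ∉ R),
        ww x R * max (f (A ∪ R) - f (insert c (A ∪ R))) 0 := by
    intro c hc
    have hcA : c ∉ A := (Finset.mem_sdiff.1 hc).2
    have hswap1 : ∑ R ∈ Finset.univ.filter (fun R : Finset (Fin n) => c ∈ R),
          ww x R * (f ((A ∪ R).erase c) - f (A ∪ R))
        = ∑ R ∈ Finset.univ.filter (fun R : Finset (Fin n) => c ∉ R),
          ww x (insert c R) * (f (A ∪ R) - f (insert c (A ∪ R))) := by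
      rw [← swap_insert c (fun R' => ww x R' * (f ((A ∪ R').erase c) - f (A ∪ R')))]
      apply Finset.sum_congr rfl
      intro R hR
      simp only [Finset.mem_filter, Finset.mem_univ, true_and] at hR
      have e1 : A ∪ insert c R = insert c (A ∪ R) := by
        ext z
        simp only [Finset.mem_union, Finset.mem_insert]
        tauto
      have e2 : (insert c (A ∪ R)).erase c = A ∪ R := by
        apply Finset.erase_insert
        simp only [Finset.mem_union]
        rintro (h | h)
        · exact hcA h
        · exact hR h
      rw [e1, e2]
    rw [hswap1]
    apply Finset.sum_le_sum
    intro R hR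
    simp only [Finset.mem_filter, Finset.mem_univ, true_and] at hR
    by_cases hxc : 1/2 < x c
    · rw [hd c (A ∪ R) hxc]
      simp only [sub_self, mul_zero]
      exact mul_nonneg (ww_nonneg x hx R) (le_max_right _ _)
    · push_neg at hxc
      have hwle : ww x (insert c R) ≤ ww x R := by
        have e := ww_flip x c R hR
        have h1 : (1 - x c) * ww x (insert c R) ≤ (1 - x c) * ww x R := by
          rw [← e]
          exact mul_le_mul_of_nonneg_right (by linarith) (ww_nonneg x hx R)
        exact le_of_mul_le_mul_left h1 (by linarith)
      calc ww x (insert c R) * (f (A ∪ R) - f (insert c (A ∪ R)))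
          ≤ ww x (insert c R) * max (f (A ∪ R) - f (insert c (A ∪ R))) 0 :=
            mul_le_mul_of_nonneg_left (le_max_left _ _) (ww_nonneg x hx _)
        _ ≤ ww x R * max (f (A ∪ R) - f (insert c (A ∪ R))) 0 :=
            mul_le_mul_of_nonneg_right hwle (le_max_right _ _)
  -- total positive-part bound
  have hsum2 : ∑ c ∈ Finset.univ \ A, ∑ R ∈ Finset.univ.filter (fun R : Finset (Fin n) => c ∉ R),
        ww x R * max (f (A ∪ R) - f (insert c (A ∪ R))) 0
      ≤ ∑ R : Finset (Fin n), ww x R * f (A ∪ R) := by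
    rw [double_swap_not (Finset.univ \ A)
      (fun c R => ww x R * max (f (A ∪ R) - f (insert c (A ∪ R))) 0)]
    apply Finset.sum_le_sum
    intro R _
    rw [← Finset.mul_sum]
    apply mul_le_mul_of_nonneg_left _ (ww_nonneg x hx R)
    apply sub_union_pos f hf h0 (A ∪ R) ((Finset.univ \ A) \ R)
    rw [Finset.disjoint_left]
    intro z hz
    simp only [Finset.mem_sdiff, Finset.mem_univ, true_and] at hz
    simp only [Finset.mem_union]
    rintro (h | h)
    · exact hz.1 h
    · exact hz.2 h
  have hstep1 : f A ≤ 2 * ∑ R : Finset (Fin n), ww x R * f (A ∪ R) := by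
    have := le_trans (Finset.sum_le_sum hterm) hsum2
    rw [hswap0] at havg
    linarith
  -- Step 2 : ∑_R ww R * f (A ∪ R) ≤ F + ∑_{i∈A} M i
  have hstep2 : ∑ R : Finset (Fin n), ww x R * f (A ∪ R)
      ≤ (∑ R : Finset (Fin n), ww x R * f R)
        + ∑ i ∈ A, ∑ R : Finset (Fin n), ww x R * (f (insert i R) - f R) := by
    have hc2 : ∀ R : Finset (Fin n),
        f (A ∪ R) ≤ f R + ∑ i ∈ A, (f (insert i R) - f R) := by
      intro R
      have hD : Disjoint (A \ R) R := Finset.sdiff_disjoint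
      have hu := sub_union f hf (A \ R) R hD
      have he : R ∪ (A \ R) = A ∪ R := by
        ext z
        simp only [Finset.mem_union, Finset.mem_sdiff]
        tauto
      rw [he] at hu
      have hext : ∑ i ∈ A \ R, (f (insert i R) - f R) = ∑ i ∈ A, (f (insert i R) - f R) := by
        apply Finset.sum_subset Finset.sdiff_subset
        intro i hiA hiN
        have hiR : i ∈ R := by
          by_contra hcon
          exact hiN (Finset.mem_sdiff.2 ⟨hiA, hcon⟩)
        rw [Finset.insert_eq_self.2 hiR]
        ring
      rw [hext] at hu
      exact hu
    calc ∑ R : Finset (Fin n), ww x R * f (A ∪ R)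
        ≤ ∑ R : Finset (Fin n), ww x R * (f R + ∑ i ∈ A, (f (insert i R) - f R)) :=
          Finset.sum_le_sum fun R _ => mul_le_mul_of_nonneg_left (hc2 R) (ww_nonneg x hx R)
      _ = (∑ R : Finset (Fin n), ww x R * f R)
          + ∑ R : Finset (Fin n), ∑ i ∈ A, ww x R * (f (insert i R) - f R) := by
          rw [← Finset.sum_add_distrib]
          apply Finset.sum_congr rfl
          intro R _
          rw [mul_add, Finset.mul_sum]
      _ = (∑ R : Finset (Fin n), ww x R * f R)
          + ∑ i ∈ A, ∑ R : Finset (Fin n), ww x R * (f (insert i R) - f R) := by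
          rw [Finset.sum_comm]
  linarith

theorem stmt_13 {n : ℕ} (f : Finset (Fin n) → ℝ) (hf : Submodular f)
    (hnonneg : ∀ S, 0 ≤ f S) (x : Fin n → ℝ) (hx : ∀ i, 0 ≤ x i ∧ x i ≤ 1)
    (α : Finset (Fin n) → ℝ) (hα : ∀ S, 0 ≤ α S)
    (hα1 : ∑ S : Finset (Fin n), α S = 1)
    (hmarg : ∀ i, ∑ S ∈ Finset.univ.filter (fun S => i ∈ S), α S = x i) :
    ∑ S : Finset (Fin n), α S * f S ≤ 200 * multilinear (fmax f) x := by
  classical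
  have hfg : ∀ T R : Finset (Fin n), T ⊆ R → f T ≤ fmax f R := by
    intro T R h
    exact Finset.le_sup' f (Finset.mem_powerset.2 h)
  set G : ℝ := ∑ R : Finset (Fin n), ww x R * fmax f R with hGdef
  have hG0 : 0 ≤ G := by
    apply Finset.sum_nonneg
    intro R _
    exact mul_nonneg (ww_nonneg x hx R)
      (le_trans (hnonneg ∅) (hfg ∅ R (Finset.empty_subset R)))
  have hGm : multilinear (fmax f) x = G := by
    rw [hGdef, multilinear]
    rfl
  set H : Finset (Fin n) := Finset.univ.filter (fun i => 1/2 < x i) with hHdef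
  set φ : Finset (Fin n) → ℝ := fun T => f (T \ H) with hφdef
  have hφsub : Submodular φ := by
    intro S T
    have e1 : (S ∪ T) \ H = (S \ H) ∪ (T \ H) := Finset.union_sdiff_distrib S T H
    have e2 : (S ∩ T) \ H = (S \ H) ∩ (T \ H) := by
      ext z
      simp only [Finset.mem_sdiff, Finset.mem_inter]
      tauto
    show f ((S ∪ T) \ H) + f ((S ∩ T) \ H) ≤ f (S \ H) + f (T \ H)
    rw [e1, e2]
    exact hf (S \ H) (T \ H)
  have hφ0 : ∀ S, 0 ≤ φ S := fun S => hnonneg (S \ H)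
  have hφd : ∀ (c : Fin n) (V : Finset (Fin n)), 1/2 < x c → φ (insert c V) = φ V := by
    intro c V hc
    have hcH : c ∈ H := by
      rw [hHdef]
      exact Finset.mem_filter.2 ⟨Finset.mem_univ c, hc⟩
    show f ((insert c V) \ H) = f (V \ H)
    congr 1
    ext z
    simp only [Finset.mem_sdiff, Finset.mem_insert]
    constructor
    · rintro ⟨rfl | hz, hzH⟩
      · exact absurd hcH hzH
      · exact ⟨hz, hzH⟩
    · rintro ⟨hz, hzH⟩
      exact ⟨Or.inr hz, hzH⟩
  -- split
  have hsplitS : ∀ S : Finset (Fin n), f S ≤ f (S ∩ H) + φ S := by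
    intro S
    have hsub := hf (S ∩ H) (S \ H)
    have e1 : (S ∩ H) ∪ (S \ H) = S := by
      ext z
      simp only [Finset.mem_union, Finset.mem_inter, Finset.mem_sdiff]
      tauto
    have e2 : (S ∩ H) ∩ (S \ H) = ∅ := by
      ext z
      simp only [Finset.mem_inter, Finset.mem_sdiff, Finset.notMem_empty, iff_false]
      tauto
    rw [e1, e2] at hsub
    have := hnonneg ∅
    show f S ≤ f (S ∩ H) + f (S \ H)
    linarith
  -- H part
  have hbound1 : ∀ S : Finset (Fin n), f (S ∩ H) ≤ 2 * G := by
    intro S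
    have hA : ∀ i ∈ S ∩ H, 1/2 < x i := by
      intro i hi
      have := (Finset.mem_inter.1 hi).2
      rw [hHdef] at this
      exact (Finset.mem_filter.1 this).2
    have h2 := K2 f hf hnonneg x hx (S ∩ H) hA
    have h3 : ∑ R : Finset (Fin n), ww x R * f ((S ∩ H) ∩ R) ≤ G := by
      rw [hGdef]
      apply Finset.sum_le_sum
      intro R _
      exact mul_le_mul_of_nonneg_left (hfg _ R Finset.inter_subset_right) (ww_nonneg x hx R)
    linarith
  -- L part
  set Fφ : ℝ := ∑ R : Finset (Fin n), ww x R * φ R with hFφdef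
  have hFφG : Fφ ≤ G := by
    rw [hFφdef, hGdef]
    apply Finset.sum_le_sum
    intro R _
    exact mul_le_mul_of_nonneg_left (hfg (R \ H) R Finset.sdiff_subset) (ww_nonneg x hx R)
  set Mφ : Fin n → ℝ := fun i => ∑ R : Finset (Fin n), ww x R * (φ (insert i R) - φ R) with hMφdef
  have hbound2 : ∀ S : Finset (Fin n), φ S ≤ 2 * (Fφ + ∑ i ∈ S, Mφ i) := by
    intro S
    exact K3 φ hφsub hφ0 x hx hφd S
  -- assemble
  have hmain : ∀ S : Finset (Fin n), f S ≤ (2 * G + 2 * Fφ) + 2 * ∑ i ∈ S, Mφ i := by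
    intro S
    have := hsplitS S
    have := hbound1 S
    have := hbound2 S
    linarith
  have hK1 : ∑ i : Fin n, x i * Mφ i ≤ Fφ := by
    rw [hFφdef, hMφdef]
    exact K1 φ hφsub hφ0 x hx Finset.univ
  have hchain : ∑ S : Finset (Fin n), α S * f S
      ≤ ∑ S : Finset (Fin n), α S * ((2 * G + 2 * Fφ) + 2 * ∑ i ∈ S, Mφ i) :=
    Finset.sum_le_sum fun S _ => mul_le_mul_of_nonneg_left (hmain S) (hα S)
  have hsplit2 : ∑ S : Finset (Fin n), α S * ((2 * G + 2 * Fφ) + 2 * ∑ i ∈ S, Mφ i)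
      = (2 * G + 2 * Fφ) + 2 * ∑ S : Finset (Fin n), α S * ∑ i ∈ S, Mφ i := by
    have : ∀ S : Finset (Fin n), α S * ((2 * G + 2 * Fφ) + 2 * ∑ i ∈ S, Mφ i)
        = α S * (2 * G + 2 * Fφ) + 2 * (α S * ∑ i ∈ S, Mφ i) := by
      intro S; ring
    rw [Finset.sum_congr rfl (fun S _ => this S), Finset.sum_add_distrib,
      ← Finset.sum_mul, hα1, one_mul, ← Finset.mul_sum]
  have hswap : ∑ S : Finset (Fin n), α S * ∑ i ∈ S, Mφ i = ∑ i : Fin n, x i * Mφ i := by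
    rw [double_swap2 α Mφ]
    apply Finset.sum_congr rfl
    intro i _
    rw [hmarg i]
  calc ∑ S : Finset (Fin n), α S * f S
      ≤ ∑ S : Finset (Fin n), α S * ((2 * G + 2 * Fφ) + 2 * ∑ i ∈ S, Mφ i) := hchain
    _ = (2 * G + 2 * Fφ) + 2 * ∑ S : Finset (Fin n), α S * ∑ i ∈ S, Mφ i := hsplit2
    _ = (2 * G + 2 * Fφ) + 2 * ∑ i : Fin n, x i * Mφ i := by rw [hswap]
    _ ≤ 200 * multilinear (fmax f) x := by
        rw [hGm]
        linarith
end

section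
/- If f is a non-negative submodular function on subsets of [n] and S_OCRS ⊆ [n] is fixed, and T_ALG is a random subset of S_OCRS such that each element of S_OCRS belongs to T_ALG with probability at least 1/2 (not necessarily independently), then E[f(T_ALG)] ≥ (1/2)·f(S_OCRS). -/
open Finset

lemma submod_marginal {n : ℕ} {f : Finset (Fin n) → ℝ} (hf : Submodular f)
    {A B : Finset (Fin n)} (hAB : A ⊆ B) {c : Fin n} (hc : c ∉ B) :
    f (insert c B) - f B ≤ f (insert c A) - f A := by
  have h := hf (insert c A) B
  have h1 : insert c A ∪ B = insert c B := by
    rw [Finset.insert_union, Finset.union_eq_right.2 hAB]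
  have h2 : insert c A ∩ B = A := by
    rw [Finset.insert_inter_of_notMem hc, Finset.inter_eq_left.2 hAB]
  rw [h1, h2] at h
  linarith

lemma abel_ineq (a b : ℕ → ℝ) (ha : ∀ i, 0 ≤ a i) (hb1 : ∀ i, b i ≤ 1)
    (hmono : ∀ i j, i ≤ j → b j ≤ b i) :
    ∀ (m : ℕ) (c : ℝ), c ≤ 1 → (∀ i, i < m → c ≤ b i) →
      c * a m ≤ a 0 + ∑ i ∈ Finset.range m, (a (i+1) - a i) * b i := by
  intro m
  induction m with
  | zero =>
    intro c hc _
    simpa using by nlinarith [ha 0]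
  | succ m ih =>
    intro c hc hcb
    have h1 := ih (b m) (hb1 m) (fun i hi => hmono i m (le_of_lt hi))
    rw [Finset.sum_range_succ]
    have h2 : c * a (m+1) ≤ b m * a (m+1) :=
      mul_le_mul_of_nonneg_right (hcb m (Nat.lt_succ_self m)) (ha _)
    have h3 : (a (m+1) - a m) * b m = b m * a (m+1) - b m * a m := by ring
    linarith

lemma sum_toFinset_eq_range {α : Type*} [DecidableEq α] (d : α) (g : α → ℝ) :
    ∀ l : List α, l.Nodup →
      ∑ e ∈ l.toFinset, g e = ∑ i ∈ Finset.range l.length, g (l.getD i d) := by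
  intro l
  induction l with
  | nil => simp
  | cons a l ih =>
    intro h
    rw [List.nodup_cons] at h
    rw [List.toFinset_cons, Finset.sum_insert (by simpa using h.1), ih h.2,
      List.length_cons, Finset.sum_range_succ']
    simp [add_comm]

lemma keyA {n : ℕ} (f : Finset (Fin n) → ℝ) (hf : Submodular f)
    (l : List (Fin n)) (hnd : l.Nodup) :
    ∀ T : Finset (Fin n), T ⊆ l.toFinset →
      f ∅ + ∑ e ∈ T, (f ((l.take (l.idxOf e + 1)).toFinset)
        - f ((l.take (l.idxOf e)).toFinset)) ≤ f T := by
  induction l using List.reverseRecOn with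
  | nil =>
    intro T hT
    have hT0 : T = ∅ := Finset.subset_empty.mp (by simpa using hT)
    subst hT0
    simp
  | append_singleton l' a ih =>
    have hn' : l'.Nodup := (List.nodup_append.mp hnd).1
    have ha : a ∉ l' := by
      have := (List.nodup_append.mp hnd).2.2
      simp [List.disjoint_singleton] at this; exact fun h => this a h rfl
    intro T hT
    have idx_a : (l' ++ [a]).idxOf a = l'.length := by
      rw [List.idxOf_append_of_notMem ha]; simp
    have take_len : (l' ++ [a]).take l'.length = l' := by
      rw [List.take_append_of_le_length le_rfl, List.take_length]
    have take_len1 : (l' ++ [a]).take (l'.length + 1) = l' ++ [a] := by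
      have : l'.length + 1 = (l' ++ [a]).length := by simp
      rw [this, List.take_length]
    have hfin : (l' ++ [a]).toFinset = insert a l'.toFinset := by
      ext e; simp [or_comm]
    have idx_mem : ∀ e ∈ l', (l' ++ [a]).idxOf e = l'.idxOf e :=
      fun e he => List.idxOf_append_of_mem he
    have take_mem : ∀ e ∈ l', (l' ++ [a]).take (l'.idxOf e + 1) = l'.take (l'.idxOf e + 1)
        ∧ (l' ++ [a]).take (l'.idxOf e) = l'.take (l'.idxOf e) := by
      intro e he
      have hlt : l'.idxOf e < l'.length := List.idxOf_lt_length_iff.2 he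
      constructor
      · exact List.take_append_of_le_length hlt
      · exact List.take_append_of_le_length (le_of_lt hlt)
    by_cases haT : a ∈ T
    · set A := T.erase a with hA_def
      have hAsub : A ⊆ l'.toFinset := by
        intro e he
        have heT := Finset.mem_of_mem_erase he
        have hne := Finset.ne_of_mem_erase he
        have := hT heT
        rw [hfin, Finset.mem_insert] at this
        tauto
      have hsum : ∑ e ∈ T, (f (((l' ++ [a]).take ((l' ++ [a]).idxOf e + 1)).toFinset)
          - f (((l' ++ [a]).take ((l' ++ [a]).idxOf e)).toFinset))
          = (f ((l' ++ [a]).toFinset) - f l'.toFinset)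
            + ∑ e ∈ A, (f ((l'.take (l'.idxOf e + 1)).toFinset)
              - f ((l'.take (l'.idxOf e)).toFinset)) := by
        rw [← Finset.add_sum_erase _ _ haT, idx_a, take_len, take_len1]
        congr 1
        apply Finset.sum_congr rfl
        intro e he
        have hel' : e ∈ l' := by
          have := hAsub he
          simpa using this
        rw [idx_mem e hel', (take_mem e hel').1, (take_mem e hel').2]
      have hIH := ih hn' A hAsub
      have hmarg : f (insert a l'.toFinset) - f l'.toFinset ≤ f (insert a A) - f A :=
        submod_marginal hf hAsub (by simpa using ha)
      have hins : insert a A = T := Finset.insert_erase haT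
      rw [hsum, hfin]
      rw [hins] at hmarg
      linarith
    · have hTsub : T ⊆ l'.toFinset := by
        intro e he
        have := hT he
        rw [hfin, Finset.mem_insert] at this
        rcases this with h | h
        · exact absurd (h ▸ he) haT
        · exact h
      have hIH := ih hn' T hTsub
      calc f ∅ + ∑ e ∈ T, (f (((l' ++ [a]).take ((l' ++ [a]).idxOf e + 1)).toFinset)
            - f (((l' ++ [a]).take ((l' ++ [a]).idxOf e)).toFinset))
          = f ∅ + ∑ e ∈ T, (f ((l'.take (l'.idxOf e + 1)).toFinset)
            - f ((l'.take (l'.idxOf e)).toFinset)) := by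
            congr 1
            apply Finset.sum_congr rfl
            intro e he
            have hel' : e ∈ l' := by simpa using hTsub he
            rw [idx_mem e hel', (take_mem e hel').1, (take_mem e hel').2]
        _ ≤ f T := hIH

theorem stmt_17 {n : ℕ} (f : Finset (Fin n) → ℝ) (hf : Submodular f)
    (hnonneg : ∀ S, 0 ≤ f S) (SOCRS : Finset (Fin n))
    (μ : Finset (Fin n) → ℝ)
    (hμnonneg : ∀ T, 0 ≤ μ T)
    (hsupp : ∀ T, μ T ≠ 0 → T ⊆ SOCRS)
    (hsum : ∑ T : Finset (Fin n), μ T = 1)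
    (hmarg : ∀ e ∈ SOCRS,
      (1 / 2 : ℝ) ≤ ∑ T ∈ Finset.univ.filter (fun T => e ∈ T), μ T) :
    (1 / 2 : ℝ) * f SOCRS ≤ ∑ T : Finset (Fin n), μ T * f T := by
  classical
  set x : Fin n → ℝ := fun e => ∑ T ∈ Finset.univ.filter (fun T => e ∈ T), μ T with hxdef
  -- bounds on x
  have hx1 : ∀ e, x e ≤ 1 := by
    intro e
    calc x e ≤ ∑ T : Finset (Fin n), μ T :=
          Finset.sum_le_sum_of_subset_of_nonneg (Finset.filter_subset _ _)
            (fun T _ _ => hμnonneg T)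
      _ = 1 := hsum
  have hx0 : ∀ e, e ∉ SOCRS → x e = 0 := by
    intro e he
    apply Finset.sum_eq_zero
    intro T hT
    by_contra hμ
    exact he (hsupp T hμ (Finset.mem_filter.mp hT).2)
  rcases SOCRS.eq_empty_or_nonempty with hS | ⟨d, hd⟩
  · subst hS
    have h1 : ∀ T : Finset (Fin n), μ T * f T = μ T * f ∅ := by
      intro T
      by_cases h : μ T = 0
      · rw [h, zero_mul, zero_mul]
      · rw [Finset.subset_empty.mp (hsupp T h)]
    calc (1/2 : ℝ) * f ∅ ≤ f ∅ := by linarith [hnonneg ∅]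
      _ = (∑ T : Finset (Fin n), μ T) * f ∅ := by rw [hsum, one_mul]
      _ = ∑ T : Finset (Fin n), μ T * f ∅ := by rw [Finset.sum_mul]
      _ = ∑ T : Finset (Fin n), μ T * f T := by
          exact Finset.sum_congr rfl fun T _ => (h1 T).symm
  · -- sorted list
    set r : Fin n → Fin n → Prop := fun e e' => x e' ≤ x e with hrdef
    haveI : Std.Total r := ⟨fun e e' => le_total (x e') (x e)⟩
    haveI : IsTrans (Fin n) r := ⟨fun _ _ _ h h' => le_trans h' h⟩
    haveI : Std.Refl r := ⟨fun e => le_refl (x e)⟩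
    set l : List (Fin n) := List.insertionSort r SOCRS.toList with hldef
    have hperm : List.Perm l SOCRS.toList := List.perm_insertionSort r _
    have hnd : l.Nodup := hperm.nodup_iff.mpr SOCRS.nodup_toList
    have hlS : l.toFinset = SOCRS := by
      ext e
      rw [List.mem_toFinset, hperm.mem_iff, Finset.mem_toList]
    have hsorted : l.Pairwise r := List.pairwise_insertionSort r _
    set m : ℕ := l.length with hmdef
    set a : ℕ → ℝ := fun i => f ((l.take i).toFinset) with hadef
    set b : ℕ → ℝ := fun i => if h : i < m then x (l.getD i d) else 1/2 with hbdef
    set lam : Fin n → ℝ := fun e => f ((l.take (l.idxOf e + 1)).toFinset)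
      - f ((l.take (l.idxOf e)).toFinset) with hlamdef
    have hget_mem : ∀ i, i < m → l.getD i d ∈ SOCRS := by
      intro i hi
      rw [← hlS, List.mem_toFinset, List.getD_eq_getElem _ _ hi]
      exact List.getElem_mem hi
    have hb_half : ∀ i, (1/2 : ℝ) ≤ b i := by
      intro i
      simp only [hbdef]
      by_cases h : i < m
      · rw [dif_pos h]; exact hmarg _ (hget_mem i h)
      · rw [dif_neg h]
    have hb1 : ∀ i, b i ≤ 1 := by
      intro i
      simp only [hbdef]
      by_cases h : i < m
      · rw [dif_pos h]; exact hx1 _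
      · rw [dif_neg h]; norm_num
    have hbmono : ∀ i j, i ≤ j → b j ≤ b i := by
      intro i j hij
      by_cases hj : j < m
      · have hi : i < m := lt_of_le_of_lt hij hj
        simp only [hbdef]
        rw [dif_pos hj, dif_pos hi]
        rw [List.getD_eq_getElem _ _ hi, List.getD_eq_getElem _ _ hj]
        have h5 := hsorted.rel_get_of_le (a := ⟨i, hi⟩) (b := ⟨j, hj⟩) hij
        simpa [hrdef] using h5
      · simp only [hbdef]
        rw [dif_neg hj]
        exact hb_half i
    have ha0 : ∀ i, 0 ≤ a i := fun i => hnonneg _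
    -- step 1: termwise lower bound
    have step1 : ∑ T : Finset (Fin n), μ T * (f ∅ + ∑ e ∈ T, lam e)
        ≤ ∑ T : Finset (Fin n), μ T * f T := by
      apply Finset.sum_le_sum
      intro T _
      by_cases h : μ T = 0
      · rw [h, zero_mul, zero_mul]
      · apply mul_le_mul_of_nonneg_left _ (hμnonneg T)
        exact keyA f hf l hnd T (hlS ▸ hsupp T h)
    -- step 2
    have step2 : ∑ T : Finset (Fin n), μ T * (f ∅ + ∑ e ∈ T, lam e)
        = f ∅ + ∑ e ∈ SOCRS, x e * lam e := by
      have e1 : ∀ T : Finset (Fin n), μ T * (f ∅ + ∑ e ∈ T, lam e)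
          = μ T * f ∅ + ∑ e : Fin n, (if e ∈ T then μ T * lam e else 0) := by
        intro T
        rw [mul_add, Finset.mul_sum]
        congr 1
        rw [Finset.sum_ite_mem]
        rw [Finset.univ_inter]
      rw [Finset.sum_congr rfl fun T _ => e1 T, Finset.sum_add_distrib,
        ← Finset.sum_mul, hsum, one_mul, Finset.sum_comm]
      congr 1
      have e2 : ∀ e : Fin n,
          (∑ T : Finset (Fin n), if e ∈ T then μ T * lam e else 0) = x e * lam e := by
        intro e
        rw [← Finset.sum_filter, ← Finset.sum_mul]
      rw [Finset.sum_congr rfl fun e _ => e2 e]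
      symm
      apply Finset.sum_subset (Finset.subset_univ SOCRS)
      intro e _ he
      rw [hx0 e he, zero_mul]
    -- step 3
    have step3 : ∑ e ∈ SOCRS, x e * lam e
        = ∑ i ∈ Finset.range m, (a (i+1) - a i) * b i := by
      rw [← hlS, sum_toFinset_eq_range d (fun e => x e * lam e) l hnd]
      apply Finset.sum_congr rfl
      intro i hi
      have hi' : i < m := Finset.mem_range.mp hi
      have hidx : l.idxOf (l.getD i d) = i := by
        rw [List.getD_eq_getElem _ _ hi']
        exact hnd.idxOf_getElem i hi'
      rw [hlamdef]
      simp only []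
      rw [hidx]
      simp only [hbdef]
      rw [dif_pos hi']
      ring
    -- step 4
    have step4 : (1/2 : ℝ) * a m ≤ a 0 + ∑ i ∈ Finset.range m, (a (i+1) - a i) * b i :=
      abel_ineq a b ha0 hb1 hbmono m (1/2) (by norm_num) (fun i _ => hb_half i)
    have ham : a m = f SOCRS := by rw [hadef]; simp [hmdef, List.take_length, hlS]
    have ha0' : a 0 = f ∅ := by rw [hadef]; simp
    calc (1/2 : ℝ) * f SOCRS = (1/2 : ℝ) * a m := by rw [ham]
      _ ≤ a 0 + ∑ i ∈ Finset.range m, (a (i+1) - a i) * b i := step4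
      _ = f ∅ + ∑ e ∈ SOCRS, x e * lam e := by rw [ha0', step3]
      _ = ∑ T : Finset (Fin n), μ T * (f ∅ + ∑ e ∈ T, lam e) := step2.symm
      _ ≤ ∑ T : Finset (Fin n), μ T * f T := step1
end
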